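/- arXiv:2304.09031 — 4 statements merged into one kernel-verified Lean document; each statement's English description precedes it below -/
import Mathlib

section
/- Let n ≥ 1 and let ξ₁, …, ξₙ be i.i.d. real random variables whose common distribution is symmetric (ξ₁ and −ξ₁ have the same law) and atomless (P(ξ₁ = a) = 0 for every a ∈ ℝ). Then P(S_k > 0 for all 1 ≤ k ≤ n) = g(n) = P(S_k ≥ 0 for all 1 ≤ k ≤ n). -/
open MeasureTheory ProbabilityTheory

noncomputable section
noncomputable def gSA : ℕ → ℝ := fun m => (Nat.centralBinom m : ℝ) / 4 ^ m

lemma gSA_zero : gSA 0 = 1 := by simp [gSA, Nat.centralBinom]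

lemma gSA_succ (k : ℕ) : ((k : ℝ) + 1) * gSA (k + 1) = ((k : ℝ) + 1/2) * gSA k := by
  have h := Nat.succ_mul_centralBinom_succ k
  have h' : ((k : ℝ) + 1) * (Nat.centralBinom (k+1) : ℝ) = 2 * (2 * k + 1) * Nat.centralBinom k := by
    exact_mod_cast congrArg (Nat.cast : ℕ → ℝ) h
  simp only [gSA]
  have h4 : (4 : ℝ) ^ (k+1) = 4 * 4 ^ k := by ring
  field_simp
  rw [h4]
  linear_combination (2 * (4:ℝ)^k) * h'

lemma gSA_sum_reflect (m : ℕ) :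
    ∑ k ∈ Finset.range (m+1), (k : ℝ) * (gSA k * gSA (m - k))
      = ((m : ℝ)/2) * ∑ k ∈ Finset.range (m+1), gSA k * gSA (m - k) := by
  have hrefl := Finset.sum_range_reflect (fun k => (k : ℝ) * (gSA k * gSA (m - k))) (m+1)
  have hrw : ∑ k ∈ Finset.range (m+1), ((m + 1 - 1 - k : ℕ) : ℝ) * (gSA (m+1-1-k) * gSA (m - (m+1-1-k)))
      = ∑ k ∈ Finset.range (m+1), ((m : ℝ) - k) * (gSA (m - k) * gSA k) := by
    apply Finset.sum_congr rfl
    intro k hk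
    have hk' : k ≤ m := by simpa [Nat.lt_succ_iff] using hk
    have h1 : m + 1 - 1 - k = m - k := by omega
    have h2 : m - (m - k) = k := by omega
    rw [h1, h2, Nat.cast_sub hk']
  rw [hrw] at hrefl
  have : ∑ k ∈ Finset.range (m+1), ((m : ℝ) - k) * (gSA (m - k) * gSA k)
      + ∑ k ∈ Finset.range (m+1), (k : ℝ) * (gSA k * gSA (m - k))
      = (m : ℝ) * ∑ k ∈ Finset.range (m+1), gSA k * gSA (m - k) := by
    rw [← Finset.sum_add_distrib, Finset.mul_sum]
    apply Finset.sum_congr rfl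
    intro k _
    ring
  rw [hrefl] at this
  linarith

lemma gSA_conv (m : ℕ) : ∑ k ∈ Finset.range (m+1), gSA k * gSA (m - k) = 1 := by
  induction m with
  | zero => simp [gSA_zero]
  | succ m ih =>
    set T := ∑ k ∈ Finset.range (m+1), gSA k * gSA (m - k) with hT
    have hS : ∑ k ∈ Finset.range (m+2), (k : ℝ) * (gSA k * gSA (m + 1 - k))
        = ((m : ℝ)/2 + 1/2) * T := by
      rw [Finset.sum_range_succ' (fun k => (k : ℝ) * (gSA k * gSA (m + 1 - k))) (m+1)]
      simp only [Nat.cast_zero, zero_mul, add_zero]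
      have : ∑ k ∈ Finset.range (m+1), ((k+1 : ℕ) : ℝ) * (gSA (k+1) * gSA (m + 1 - (k+1)))
          = ∑ k ∈ Finset.range (m+1), ((k : ℝ) + 1/2) * (gSA k * gSA (m - k)) := by
        apply Finset.sum_congr rfl
        intro k _
        have h1 : m + 1 - (k+1) = m - k := by omega
        have h2 : ((k : ℝ) + 1) * gSA (k+1) = ((k : ℝ) + 1/2) * gSA k := gSA_succ k
        rw [h1]
        push_cast
        calc ((k : ℝ) + 1) * (gSA (k+1) * gSA (m - k))
            = (((k : ℝ) + 1) * gSA (k+1)) * gSA (m - k) := by ring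
          _ = (((k : ℝ) + 1/2) * gSA k) * gSA (m - k) := by rw [h2]
          _ = ((k : ℝ) + 1/2) * (gSA k * gSA (m - k)) := by ring
      rw [this]
      have := gSA_sum_reflect m
      rw [Finset.sum_congr rfl (fun k _ => by ring :
        ∀ k ∈ Finset.range (m+1), ((k : ℝ) + 1/2) * (gSA k * gSA (m - k))
          = (k : ℝ) * (gSA k * gSA (m - k)) + (1/2) * (gSA k * gSA (m - k)))]
      rw [Finset.sum_add_distrib, this, ← Finset.mul_sum, ← hT]
      ring
    have hS2 := gSA_sum_reflect (m+1)
    rw [hS] at hS2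
    have hm : ((m+1 : ℕ) : ℝ) / 2 = (m : ℝ)/2 + 1/2 := by push_cast; ring
    rw [hm] at hS2
    have hne : (m : ℝ)/2 + 1/2 ≠ 0 := by positivity
    have heq := mul_left_cancel₀ hne hS2
    rw [← heq]
    exact ih
noncomputable section

def padSA {m : ℕ} (x : Fin m → ℝ) (i : ℕ) : ℝ := if h : i < m then x ⟨i, h⟩ else 0

def psumSA {m : ℕ} (x : Fin m → ℝ) (k : ℕ) : ℝ := ∑ i ∈ Finset.range k, padSA x i

lemma psumSA_zero {m : ℕ} (x : Fin m → ℝ) : psumSA x 0 = 0 := by simp [psumSA]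

lemma psumSA_succ {m : ℕ} (x : Fin m → ℝ) (k : ℕ) :
    psumSA x (k + 1) = psumSA x k + padSA x k := Finset.sum_range_succ _ _

lemma measurable_padSA {m i : ℕ} : Measurable fun x : Fin m → ℝ => padSA x i := by
  unfold padSA
  split
  · exact measurable_pi_apply _
  · exact measurable_const

lemma measurable_psumSA {m k : ℕ} : Measurable fun x : Fin m → ℝ => psumSA x k :=
  Finset.measurable_sum _ fun i _ => measurable_padSA

def glueSA {a b : ℕ} (y : Fin a → ℝ) (z : Fin b → ℝ) : Fin (a + b) → ℝ :=
  fun i => if h : (i : ℕ) < a then y ⟨i, h⟩ else z ⟨(i : ℕ) - a, by have := i.isLt; omega⟩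

lemma measurable_glueSA {a b : ℕ} :
    Measurable fun p : (Fin a → ℝ) × (Fin b → ℝ) => glueSA p.1 p.2 := by
  apply measurable_pi_lambda
  intro i
  unfold glueSA
  split
  · exact (measurable_pi_apply _).comp measurable_fst
  · exact (measurable_pi_apply _).comp measurable_snd

abbrev nuSA (μ : Measure ℝ) (m : ℕ) : Measure (Fin m → ℝ) := Measure.pi fun _ => μ

variable {μ : Measure ℝ} [IsProbabilityMeasure μ]

lemma map_glueSA (a b : ℕ) :
    Measure.map (fun p : (Fin a → ℝ) × (Fin b → ℝ) => glueSA p.1 p.2)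
      ((nuSA μ a).prod (nuSA μ b)) = nuSA μ (a + b) := by
  refine (Measure.pi_eq (μ := fun _ : Fin (a+b) => μ) fun s hs => ?_).symm
  rw [Measure.map_apply measurable_glueSA (MeasurableSet.univ_pi hs)]
  have hpre : (fun p : (Fin a → ℝ) × (Fin b → ℝ) => glueSA p.1 p.2) ⁻¹' Set.univ.pi s
      = (Set.univ.pi fun j : Fin a => s (Fin.castAdd b j)) ×ˢ
        (Set.univ.pi fun j : Fin b => s (Fin.natAdd a j)) := by
    ext ⟨y, z⟩
    simp only [Set.mem_preimage, Set.mem_pi, Set.mem_univ, forall_true_left, Set.mem_prod]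
    constructor
    · intro h
      refine ⟨fun j => ?_, fun j => ?_⟩
      · have := h (Fin.castAdd b j)
        have hlt : ((Fin.castAdd b j : Fin (a+b)) : ℕ) < a := by simp [j.isLt]
        rwa [glueSA, dif_pos hlt] at this
      · have := h (Fin.natAdd a j)
        have hge : ¬ ((Fin.natAdd a j : Fin (a+b)) : ℕ) < a := by simp
        rw [glueSA, dif_neg hge] at this
        have : z ⟨a + (j : ℕ) - a, _⟩ ∈ s (Fin.natAdd a j) := this
        simpa [Nat.add_sub_cancel_left] using this
    · rintro ⟨h1, h2⟩ i
      by_cases h : (i : ℕ) < a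
      · have := h1 ⟨(i : ℕ), h⟩
        have hi : Fin.castAdd b ⟨(i : ℕ), h⟩ = i := by ext; rfl
        rw [hi] at this
        rwa [glueSA, dif_pos h]
      · have hlt : (i : ℕ) - a < b := by have := i.isLt; omega
        have := h2 ⟨(i : ℕ) - a, hlt⟩
        have hi : Fin.natAdd a ⟨(i : ℕ) - a, hlt⟩ = i := by ext; simp only [Fin.coe_natAdd]; omega
        rw [hi] at this
        rwa [glueSA, dif_neg h]
  rw [hpre, Measure.prod_prod, Measure.pi_pi, Measure.pi_pi]
  exact (Fin.prod_univ_add (f := fun i => μ (s i))).symm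

lemma psumSA_glue_left {a b : ℕ} (y : Fin a → ℝ) (z : Fin b → ℝ) {k : ℕ} (hk : k ≤ a) :
    psumSA (glueSA y z) k = psumSA y k := by
  unfold psumSA
  refine Finset.sum_congr rfl fun i hi => ?_
  have hia : i < a := lt_of_lt_of_le (Finset.mem_range.mp hi) hk
  have hiab : i < a + b := by omega
  rw [padSA, dif_pos hiab, padSA, dif_pos hia, glueSA]
  rw [dif_pos (show ((⟨i, hiab⟩ : Fin (a+b)) : ℕ) < a from hia)]

lemma psumSA_glue_add {a b : ℕ} (y : Fin a → ℝ) (z : Fin b → ℝ) {j : ℕ} (hj : j ≤ b) :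
    psumSA (glueSA y z) (a + j) = psumSA y a + psumSA z j := by
  induction j with
  | zero => rw [Nat.add_zero, psumSA_glue_left y z le_rfl, psumSA_zero, add_zero]
  | succ j ih =>
    have hj' : j ≤ b := by omega
    rw [← Nat.add_assoc, psumSA_succ, psumSA_succ, ih hj', add_assoc]
    congr 1
    have h1 : a + j < a + b := by omega
    have h2 : j < b := by omega
    rw [padSA, dif_pos h1, padSA, dif_pos h2, glueSA]
    rw [dif_neg (show ¬ ((⟨a + j, h1⟩ : Fin (a+b)) : ℕ) < a by simp)]
    congr 1
    refine congrArg z ?_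
    apply Fin.ext
    simp

lemma map_negSA (hμ : μ.map (fun r : ℝ => -r) = μ) (m : ℕ) :
    Measure.map (fun x : Fin m → ℝ => fun i => -(x i)) (nuSA μ m) = nuSA μ m := by
  refine (Measure.pi_eq (μ := fun _ : Fin m => μ) fun s hs => ?_).symm
  have hmeas : Measurable fun x : Fin m → ℝ => fun i => -(x i) :=
    measurable_pi_lambda _ fun i => (measurable_pi_apply i).neg
  rw [Measure.map_apply hmeas (MeasurableSet.univ_pi hs)]
  have hpre : (fun x : Fin m → ℝ => fun i => -(x i)) ⁻¹' Set.univ.pi s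
      = Set.univ.pi fun i => (fun r : ℝ => -r) ⁻¹' s i := by
    ext x; simp [Set.mem_pi]
  rw [hpre, Measure.pi_pi]
  exact Finset.prod_congr rfl fun i _ => by
    rw [← Measure.map_apply measurable_neg (hs i), hμ]

lemma map_revSA (m : ℕ) :
    Measure.map (fun x : Fin m → ℝ => fun i : Fin m => x i.rev) (nuSA μ m) = nuSA μ m := by
  refine (Measure.pi_eq (μ := fun _ : Fin m => μ) fun s hs => ?_).symm
  have hmeas : Measurable fun x : Fin m → ℝ => fun i : Fin m => x i.rev :=
    measurable_pi_lambda _ fun i => measurable_pi_apply _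
  rw [Measure.map_apply hmeas (MeasurableSet.univ_pi hs)]
  have hpre : (fun x : Fin m → ℝ => fun i : Fin m => x i.rev) ⁻¹' Set.univ.pi s
      = Set.univ.pi fun i => s i.rev := by
    ext x
    simp only [Set.mem_preimage, Set.mem_pi, Set.mem_univ, forall_true_left]
    constructor
    · intro h i; have := h i.rev; rwa [Fin.rev_rev] at this
    · intro h i; have := h i.rev; rwa [Fin.rev_rev] at this
  rw [hpre, Measure.pi_pi]
  exact Fintype.prod_bijective Fin.rev Fin.rev_involutive.bijective _ _ fun i => rfl

lemma nuSA_single (hatom : ∀ a : ℝ, μ {a} = 0) (a : ℝ) :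
    nuSA μ 1 {u : Fin 1 → ℝ | u 0 = a} = 0 := by
  have h : {u : Fin 1 → ℝ | u 0 = a} = Set.univ.pi fun _ : Fin 1 => ({a} : Set ℝ) := by
    ext u
    simp only [Set.mem_setOf_eq, Set.mem_pi, Set.mem_univ, forall_true_left, Set.mem_singleton_iff]
    constructor
    · intro h i; rw [Subsingleton.elim i 0]; exact h
    · intro h; exact h 0
  rw [h, Measure.pi_pi]
  simp [hatom a]

lemma nuSA_sum_atom (hatom : ∀ a : ℝ, μ {a} = 0) {b : ℕ} (hb : 1 ≤ b) (c : ℝ) :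
    nuSA μ b {z : Fin b → ℝ | psumSA z b = c} = 0 := by
  obtain ⟨t, rfl⟩ : ∃ t, b = 1 + t := ⟨b - 1, by omega⟩
  have hset : MeasurableSet {z : Fin (1+t) → ℝ | psumSA z (1+t) = c} :=
    measurable_psumSA (measurableSet_singleton c)
  rw [← map_glueSA 1 t, Measure.map_apply measurable_glueSA hset]
  have hpre : (fun p : (Fin 1 → ℝ) × (Fin t → ℝ) => glueSA p.1 p.2) ⁻¹'
      {z : Fin (1+t) → ℝ | psumSA z (1+t) = c}
      = {p : (Fin 1 → ℝ) × (Fin t → ℝ) | p.1 0 + psumSA p.2 t = c} := by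
    ext ⟨u, v⟩
    simp only [Set.mem_preimage, Set.mem_setOf_eq]
    rw [psumSA_glue_add u v le_rfl]
    have : psumSA u 1 = u 0 := by
      rw [psumSA, Finset.sum_range_one, padSA, dif_pos one_pos]
      exact congrArg u (Subsingleton.elim _ _)
    rw [this]
  rw [hpre]
  have hmeasset : MeasurableSet {p : (Fin 1 → ℝ) × (Fin t → ℝ) | p.1 0 + psumSA p.2 t = c} := by
    have : Measurable fun p : (Fin 1 → ℝ) × (Fin t → ℝ) => p.1 0 + psumSA p.2 t :=
      ((measurable_pi_apply _).comp measurable_fst).add (measurable_psumSA.comp measurable_snd)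
    exact this (measurableSet_singleton c)
  rw [Measure.prod_apply_symm hmeasset]
  have : ∀ v : Fin t → ℝ, nuSA μ 1 ((fun u => (u, v)) ⁻¹' {p : (Fin 1 → ℝ) × (Fin t → ℝ) | p.1 0 + psumSA p.2 t = c}) = 0 := by
    intro v
    have h : ((fun u => (u, v)) ⁻¹' {p : (Fin 1 → ℝ) × (Fin t → ℝ) | p.1 0 + psumSA p.2 t = c})
        = {u : Fin 1 → ℝ | u 0 = c - psumSA v t} := by
      ext u
      simp only [Set.mem_preimage, Set.mem_setOf_eq]
      constructor <;> intro h <;> linarith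
    rw [h]
    exact nuSA_single hatom _
  simp only [this]
  simp

lemma nuSA_interval_atom (hatom : ∀ a : ℝ, μ {a} = 0) {n i j : ℕ} (hij : i < j) (hjn : j ≤ n) :
    nuSA μ n {x : Fin n → ℝ | psumSA x j = psumSA x i} = 0 := by
  obtain ⟨r, rfl⟩ : ∃ r, n = j + r := ⟨n - j, by omega⟩
  have hset : MeasurableSet {x : Fin (j+r) → ℝ | psumSA x j = psumSA x i} :=
    measurableSet_eq_fun measurable_psumSA measurable_psumSA
  rw [← map_glueSA j r, Measure.map_apply measurable_glueSA hset]
  have hpre : (fun p : (Fin j → ℝ) × (Fin r → ℝ) => glueSA p.1 p.2) ⁻¹'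
      {x : Fin (j+r) → ℝ | psumSA x j = psumSA x i}
      = {y : Fin j → ℝ | psumSA y j = psumSA y i} ×ˢ (Set.univ : Set (Fin r → ℝ)) := by
    ext ⟨y, z⟩
    simp only [Set.mem_preimage, Set.mem_setOf_eq, Set.mem_prod, Set.mem_univ, and_true]
    rw [psumSA_glue_left y z le_rfl, psumSA_glue_left y z (le_of_lt hij)]
  rw [hpre, Measure.prod_prod, measure_univ, mul_one]
  -- now reduce to psum over the window
  obtain ⟨w, rfl⟩ : ∃ w, j = i + w := ⟨j - i, by omega⟩
  have hw : 1 ≤ w := by omega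
  have hset2 : MeasurableSet {y : Fin (i+w) → ℝ | psumSA y (i+w) = psumSA y i} :=
    measurableSet_eq_fun measurable_psumSA measurable_psumSA
  rw [← map_glueSA i w, Measure.map_apply measurable_glueSA hset2]
  have hpre2 : (fun p : (Fin i → ℝ) × (Fin w → ℝ) => glueSA p.1 p.2) ⁻¹'
      {y : Fin (i+w) → ℝ | psumSA y (i+w) = psumSA y i}
      = (Set.univ : Set (Fin i → ℝ)) ×ˢ {v : Fin w → ℝ | psumSA v w = 0} := by
    ext ⟨u, v⟩
    simp only [Set.mem_preimage, Set.mem_setOf_eq, Set.mem_prod, Set.mem_univ, true_and]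
    rw [psumSA_glue_add u v le_rfl, psumSA_glue_left u v le_rfl]
    constructor <;> intro h <;> linarith
  rw [hpre2, Measure.prod_prod, measure_univ, one_mul]
  exact nuSA_sum_atom hatom hw 0

end
def posESA (m : ℕ) : Set (Fin m → ℝ) := {x | ∀ k, 1 ≤ k → k ≤ m → 0 < psumSA x k}
def negESA (m : ℕ) : Set (Fin m → ℝ) := {x | ∀ k, 1 ≤ k → k ≤ m → psumSA x k < 0}
def maxESA (m : ℕ) : Set (Fin m → ℝ) := {x | ∀ j, j < m → psumSA x j < psumSA x m}
def argESA (m k : ℕ) : Set (Fin m → ℝ) :=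
  {x | (∀ j, j < k → psumSA x j < psumSA x k) ∧ ∀ j, k < j → j ≤ m → psumSA x j < psumSA x k}

lemma measurableSet_posESA (m : ℕ) : MeasurableSet (posESA m) := by
  have h : posESA m = ⋂ k, ⋂ (_ : 1 ≤ k), ⋂ (_ : k ≤ m), {x : Fin m → ℝ | 0 < psumSA x k} := by
    ext x; simp [posESA]
  rw [h]
  exact MeasurableSet.iInter fun k => MeasurableSet.iInter fun _ => MeasurableSet.iInter fun _ =>
    measurableSet_lt measurable_const measurable_psumSA

lemma measurableSet_negESA (m : ℕ) : MeasurableSet (negESA m) := by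
  have h : negESA m = ⋂ k, ⋂ (_ : 1 ≤ k), ⋂ (_ : k ≤ m), {x : Fin m → ℝ | psumSA x k < 0} := by
    ext x; simp [negESA]
  rw [h]
  exact MeasurableSet.iInter fun k => MeasurableSet.iInter fun _ => MeasurableSet.iInter fun _ =>
    measurableSet_lt measurable_psumSA measurable_const

lemma measurableSet_maxESA (m : ℕ) : MeasurableSet (maxESA m) := by
  have h : maxESA m = ⋂ j, ⋂ (_ : j < m), {x : Fin m → ℝ | psumSA x j < psumSA x m} := by
    ext x; simp [maxESA]
  rw [h]
  exact MeasurableSet.iInter fun k => MeasurableSet.iInter fun _ =>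
    measurableSet_lt measurable_psumSA measurable_psumSA

lemma measurableSet_argESA (m k : ℕ) : MeasurableSet (argESA m k) := by
  have h : argESA m k = (⋂ j, ⋂ (_ : j < k), {x : Fin m → ℝ | psumSA x j < psumSA x k}) ∩
      ⋂ j, ⋂ (_ : k < j), ⋂ (_ : j ≤ m), {x : Fin m → ℝ | psumSA x j < psumSA x k} := by
    ext x; simp [argESA, Set.mem_iInter]
  rw [h]
  exact (MeasurableSet.iInter fun j => MeasurableSet.iInter fun _ =>
      measurableSet_lt measurable_psumSA measurable_psumSA).inter
    (MeasurableSet.iInter fun j => MeasurableSet.iInter fun _ => MeasurableSet.iInter fun _ =>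
      measurableSet_lt measurable_psumSA measurable_psumSA)

variable {μ : Measure ℝ} [IsProbabilityMeasure μ]

lemma argESA_prod (a b : ℕ) :
    nuSA μ (a + b) (argESA (a + b) a) = nuSA μ a (maxESA a) * nuSA μ b (negESA b) := by
  rw [← map_glueSA a b, Measure.map_apply measurable_glueSA (measurableSet_argESA _ _)]
  have hpre : (fun p : (Fin a → ℝ) × (Fin b → ℝ) => glueSA p.1 p.2) ⁻¹' argESA (a + b) a
      = maxESA a ×ˢ negESA b := by
    ext ⟨y, z⟩
    simp only [Set.mem_preimage, argESA, maxESA, negESA, Set.mem_setOf_eq, Set.mem_prod]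
    constructor
    · rintro ⟨h1, h2⟩
      constructor
      · intro j hj
        have := h1 j hj
        rwa [psumSA_glue_left y z (le_of_lt hj), psumSA_glue_left y z le_rfl] at this
      · intro k hk1 hkb
        have := h2 (a + k) (by omega) (by omega)
        rw [psumSA_glue_add y z hkb, psumSA_glue_left y z le_rfl] at this
        linarith
    · rintro ⟨h1, h2⟩
      constructor
      · intro j hj
        rw [psumSA_glue_left y z (le_of_lt hj), psumSA_glue_left y z le_rfl]
        exact h1 j hj
      · intro j hj1 hj2
        have hj3 : j = a + (j - a) := by omega
        rw [hj3, psumSA_glue_add y z (by omega), psumSA_glue_left y z le_rfl]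
        have := h2 (j - a) (by omega) (by omega)
        linarith
  rw [hpre, Measure.prod_prod]

lemma psumSA_rev {a : ℕ} (x : Fin a → ℝ) {j : ℕ} (hj : j ≤ a) :
    psumSA (fun i : Fin a => x i.rev) j = psumSA x a - psumSA x (a - j) := by
  induction j with
  | zero => rw [psumSA_zero, Nat.sub_zero, sub_self]
  | succ j ih =>
    have hj' : j ≤ a := by omega
    rw [psumSA_succ, ih hj']
    have hja : j < a := by omega
    have h1 : padSA (fun i : Fin a => x i.rev) j = x ⟨a - j - 1, by omega⟩ := by
      rw [padSA, dif_pos hja]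
      refine congrArg x ?_
      apply Fin.ext
      rw [Fin.val_rev]
      show a - (j + 1) = a - j - 1
      omega
    have h2 : psumSA x (a - j) = psumSA x (a - (j+1)) + x ⟨a - j - 1, by omega⟩ := by
      have h3 : a - j = (a - (j+1)) + 1 := by omega
      conv_lhs => rw [h3]
      rw [psumSA_succ]
      congr 1
      rw [padSA, dif_pos (show a - (j+1) < a by omega)]
      refine congrArg x ?_
      apply Fin.ext
      show a - (j+1) = a - j - 1
      omega
    rw [h1, h2]
    ring

lemma maxESA_eq_posESA (a : ℕ) : nuSA μ a (maxESA a) = nuSA μ a (posESA a) := by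
  conv_lhs => rw [← map_revSA (μ := μ) a]
  have hmeas : Measurable fun x : Fin a → ℝ => fun i : Fin a => x i.rev :=
    measurable_pi_lambda _ fun i => measurable_pi_apply _
  rw [Measure.map_apply hmeas (measurableSet_maxESA a)]
  congr 1
  ext x
  simp only [Set.mem_preimage, maxESA, posESA, Set.mem_setOf_eq]
  constructor
  · intro h k hk1 hka
    have := h (a - k) (by omega)
    rw [psumSA_rev x (by omega), psumSA_rev x le_rfl, Nat.sub_self, psumSA_zero,
      (show a - (a - k) = k by omega)] at this
    linarith
  · intro h j hj
    rw [psumSA_rev x (le_of_lt hj), psumSA_rev x le_rfl, Nat.sub_self, psumSA_zero]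
    have := h (a - j) (by omega) (by omega)
    linarith

lemma psumSA_neg {m : ℕ} (x : Fin m → ℝ) (k : ℕ) :
    psumSA (fun i => -(x i)) k = -psumSA x k := by
  rw [psumSA, psumSA, ← Finset.sum_neg_distrib]
  refine Finset.sum_congr rfl fun i _ => ?_
  rw [padSA, padSA]
  split
  · rfl
  · rw [neg_zero]

lemma negESA_eq_posESA (hμs : μ.map (fun r : ℝ => -r) = μ) (b : ℕ) :
    nuSA μ b (negESA b) = nuSA μ b (posESA b) := by
  conv_lhs => rw [← map_negSA hμs b]
  have hmeas : Measurable fun x : Fin b → ℝ => fun i => -(x i) :=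
    measurable_pi_lambda _ fun i => (measurable_pi_apply i).neg
  rw [Measure.map_apply hmeas (measurableSet_negESA b)]
  congr 1
  ext x
  simp only [Set.mem_preimage, negESA, posESA, Set.mem_setOf_eq]
  constructor
  · intro h k hk1 hkb
    have := h k hk1 hkb
    rw [psumSA_neg] at this
    linarith
  · intro h k hk1 hkb
    rw [psumSA_neg]
    have := h k hk1 hkb
    linarith

lemma sum_argESA (hatom : ∀ a : ℝ, μ {a} = 0) (n : ℕ) :
    ∑ k ∈ Finset.range (n + 1), nuSA μ n (argESA n k) = 1 := by
  have hdisj : Set.PairwiseDisjoint ↑(Finset.range (n+1)) (fun k => argESA n k) := by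
    intro k hk l hl hkl
    refine Set.disjoint_left.mpr fun x hxk hxl => ?_
    rcases lt_or_gt_of_ne hkl with h | h
    · have hk' : k ≤ n := by simpa [Nat.lt_succ_iff] using hk
      have hl' : l ≤ n := by simpa [Nat.lt_succ_iff] using hl
      have h1 := hxk.2 l h hl'
      have h2 := hxl.1 k h
      linarith
    · have hk' : k ≤ n := by simpa [Nat.lt_succ_iff] using hk
      have h1 := hxl.2 k h hk'
      have h2 := hxk.1 l h
      linarith
  rw [← measure_biUnion_finset hdisj fun k _ => measurableSet_argESA n k]
  set T : Set (Fin n → ℝ) :=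
    ⋃ (i : ℕ) (j : ℕ) (_ : i < j) (_ : j ≤ n), {x : Fin n → ℝ | psumSA x j = psumSA x i} with hTdef
  have hT0 : nuSA μ n T = 0 := by
    refine measure_iUnion_null fun i => measure_iUnion_null fun j => ?_
    refine measure_iUnion_null fun hij => measure_iUnion_null fun hjn => ?_
    exact nuSA_interval_atom hatom hij hjn
  have hcover : (Set.univ : Set (Fin n → ℝ)) ⊆ (⋃ k ∈ Finset.range (n+1), argESA n k) ∪ T := by
    intro x _
    by_cases hx : x ∈ T
    · exact Or.inr hx
    · left
      have hnotie : ∀ i j, i < j → j ≤ n → psumSA x j ≠ psumSA x i := by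
        intro i j hij hjn heq
        exact hx (Set.mem_iUnion.mpr ⟨i, Set.mem_iUnion.mpr ⟨j, Set.mem_iUnion.mpr ⟨hij,
          Set.mem_iUnion.mpr ⟨hjn, heq⟩⟩⟩⟩)
      obtain ⟨k, hk, hmax⟩ := Finset.exists_max_image (Finset.range (n+1))
        (fun j => psumSA x j) ⟨0, Finset.mem_range.mpr (by omega)⟩
      have hk' : k ≤ n := by simpa [Nat.lt_succ_iff] using hk
      refine Set.mem_biUnion hk ⟨fun j hj => ?_, fun j hj1 hj2 => ?_⟩
      · have hle := hmax j (Finset.mem_range.mpr (by omega))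
        have hne := hnotie j k hj hk'
        rcases lt_or_eq_of_le hle with h | h
        · exact h
        · exact absurd h.symm hne
      · have hle := hmax j (Finset.mem_range.mpr (by omega))
        have hne := hnotie k j hj1 hj2
        rcases lt_or_eq_of_le hle with h | h
        · exact h
        · exact absurd h hne
  have hone : nuSA μ n (⋃ k ∈ Finset.range (n+1), argESA n k) = 1 := by
    refine le_antisymm prob_le_one ?_
    calc (1 : ENNReal) = nuSA μ n Set.univ := (measure_univ).symm
      _ ≤ nuSA μ n ((⋃ k ∈ Finset.range (n+1), argESA n k) ∪ T) := measure_mono hcover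
      _ ≤ nuSA μ n (⋃ k ∈ Finset.range (n+1), argESA n k) + nuSA μ n T := measure_union_le _ _
      _ = nuSA μ n (⋃ k ∈ Finset.range (n+1), argESA n k) := by rw [hT0, add_zero]
  exact hone

lemma key_conv (hμs : μ.map (fun r : ℝ => -r) = μ) (hatom : ∀ a : ℝ, μ {a} = 0) (n : ℕ) :
    ∑ k ∈ Finset.range (n + 1),
      nuSA μ k (posESA k) * nuSA μ (n - k) (posESA (n - k)) = 1 := by
  rw [← sum_argESA hatom n]
  refine Finset.sum_congr rfl fun k hk => ?_
  have hk' : k ≤ n := by simpa [Nat.lt_succ_iff] using hk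
  obtain ⟨b, rfl⟩ := Nat.exists_eq_add_of_le hk'
  rw [Nat.add_sub_cancel_left, argESA_prod, maxESA_eq_posESA, negESA_eq_posESA hμs]
def pSA (μ : Measure ℝ) (m : ℕ) : ℝ := (nuSA μ m (posESA m)).toReal

variable {μ : Measure ℝ} [IsProbabilityMeasure μ]

lemma posESA_zero : posESA 0 = (Set.univ : Set (Fin 0 → ℝ)) := by
  ext x
  simp only [posESA, Set.mem_setOf_eq, Set.mem_univ, iff_true]
  intro k h1 h2
  omega

lemma pSA_zero : pSA μ 0 = 1 := by
  rw [pSA, posESA_zero, measure_univ, ENNReal.toReal_one]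

lemma key_conv_real (hμs : μ.map (fun r : ℝ => -r) = μ) (hatom : ∀ a : ℝ, μ {a} = 0) (n : ℕ) :
    ∑ k ∈ Finset.range (n + 1), pSA μ k * pSA μ (n - k) = 1 := by
  have h := key_conv hμs hatom n
  have h2 : ∑ k ∈ Finset.range (n + 1), pSA μ k * pSA μ (n - k)
      = (∑ k ∈ Finset.range (n + 1),
          nuSA μ k (posESA k) * nuSA μ (n - k) (posESA (n - k))).toReal := by
    rw [ENNReal.toReal_sum (fun k _ => ENNReal.mul_ne_top (measure_ne_top _ _) (measure_ne_top _ _))]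
    exact Finset.sum_congr rfl fun k _ => (ENNReal.toReal_mul).symm
  rw [h2, h, ENNReal.toReal_one]

lemma pSA_eq_gSA (hμs : μ.map (fun r : ℝ => -r) = μ) (hatom : ∀ a : ℝ, μ {a} = 0) (m : ℕ) :
    pSA μ m = gSA m := by
  induction m using Nat.strong_induction_on with
  | _ m ih =>
    cases m with
    | zero => rw [pSA_zero, gSA_zero]
    | succ m' =>
      have hp := key_conv_real hμs hatom (m' + 1)
      have hg := gSA_conv (m' + 1)
      rw [Finset.sum_range_succ, Finset.sum_range_succ'] at hp hg
      have hint : ∀ k ∈ Finset.range m', pSA μ (k+1) * pSA μ (m' + 1 - (k+1))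
          = gSA (k+1) * gSA (m' + 1 - (k+1)) := by
        intro k hk
        have hk' : k < m' := Finset.mem_range.mp hk
        rw [ih (k+1) (by omega), ih (m' + 1 - (k+1)) (by omega)]
      rw [Finset.sum_congr rfl hint] at hp
      simp only [Nat.sub_self, Nat.sub_zero, pSA_zero, gSA_zero, one_mul, mul_one] at hp hg
      linarith

/-- Sparre Andersen: for i.i.d. symmetric atomless random variables, the persistence
probabilities `P(S_k > 0, 1 ≤ k ≤ n)` and `P(S_k ≥ 0, 1 ≤ k ≤ n)` are both equal to
`g(n) = (2n choose n) / 4^n`. -/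
theorem sparre_andersen_iid_symmetric_atomless
    {Ω : Type*} [MeasurableSpace Ω] (P : Measure Ω) [IsProbabilityMeasure P]
    (n : ℕ) (hn : 1 ≤ n) (ξ : ℕ → Ω → ℝ)
    (hmeas : ∀ i, i < n → Measurable (ξ i))
    (hindep : iIndepFun (fun i : Fin n => ξ i) P)
    (hident : ∀ i : Fin n, Measure.map (ξ i) P = Measure.map (ξ 0) P)
    (hsymm : Measure.map (ξ 0) P = Measure.map (fun ω => -(ξ 0 ω)) P)
    (hatomless : ∀ a : ℝ, P {ω | ξ 0 ω = a} = 0)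
    (S : ℕ → Ω → ℝ) (hS : ∀ k ω, S k ω = ∑ i ∈ Finset.range k, ξ i ω) :
    P {ω | ∀ k, 1 ≤ k → k ≤ n → 0 < S k ω}
        = ENNReal.ofReal ((Nat.choose (2 * n) n : ℝ) / 4 ^ n) ∧
    P {ω | ∀ k, 1 ≤ k → k ≤ n → 0 ≤ S k ω}
        = ENNReal.ofReal ((Nat.choose (2 * n) n : ℝ) / 4 ^ n) := by
  have h0n : 0 < n := hn
  have hmeas0 : Measurable (ξ 0) := hmeas 0 h0n
  set μ : Measure ℝ := Measure.map (ξ 0) P with hμdef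
  haveI : IsProbabilityMeasure μ := Measure.isProbabilityMeasure_map hmeas0.aemeasurable
  have hμs : μ.map (fun r : ℝ => -r) = μ := by
    rw [hμdef, Measure.map_map measurable_neg hmeas0]
    exact hsymm.symm
  have hatomμ : ∀ a : ℝ, μ {a} = 0 := by
    intro a
    rw [hμdef, Measure.map_apply hmeas0 (measurableSet_singleton a)]
    exact hatomless a
  set T : Ω → (Fin n → ℝ) := fun ω i => ξ i ω with hTdef
  have hT : Measurable T := measurable_pi_lambda _ fun i => hmeas i i.isLt
  have hmap : Measure.map T P = nuSA μ n := by
    refine (Measure.pi_eq (μ := fun _ : Fin n => μ) fun s hs => ?_).symm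
    rw [Measure.map_apply hT (MeasurableSet.univ_pi hs)]
    have h2 := hindep.measure_inter_preimage_eq_mul (S := Finset.univ) (sets := s)
      (fun i _ => hs i)
    have hpre : T ⁻¹' Set.univ.pi s = ⋂ i ∈ Finset.univ, (fun i : Fin n => ξ i) i ⁻¹' s i := by
      ext ω
      simp [Set.mem_pi, hTdef]
    rw [hpre, h2]
    refine Finset.prod_congr rfl fun i _ => ?_
    rw [← Measure.map_apply (hmeas i i.isLt) (hs i)]
    exact congrFun (congrArg _ (hident i)) (s i)
  have hpsum : ∀ (ω : Ω) (k : ℕ), k ≤ n → psumSA (T ω) k = S k ω := by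
    intro ω k hk
    rw [hS]
    refine Finset.sum_congr rfl fun i hi => ?_
    have hi' : i < n := lt_of_lt_of_le (Finset.mem_range.mp hi) hk
    rw [padSA, dif_pos hi']
  have hEgt : {ω | ∀ k, 1 ≤ k → k ≤ n → 0 < S k ω} = T ⁻¹' posESA n := by
    ext ω
    simp only [Set.mem_setOf_eq, Set.mem_preimage, posESA]
    constructor
    · intro h k h1 h2; rw [hpsum ω k h2]; exact h k h1 h2
    · intro h k h1 h2; have := h k h1 h2; rwa [hpsum ω k h2] at this
  have hgt : P {ω | ∀ k, 1 ≤ k → k ≤ n → 0 < S k ω} = nuSA μ n (posESA n) := by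
    rw [hEgt, ← Measure.map_apply hT (measurableSet_posESA n), hmap]
  have hval : nuSA μ n (posESA n) = ENNReal.ofReal ((Nat.choose (2 * n) n : ℝ) / 4 ^ n) := by
    have h1 : pSA μ n = gSA n := pSA_eq_gSA hμs hatomμ n
    have h2 : nuSA μ n (posESA n) = ENNReal.ofReal (pSA μ n) :=
      (ENNReal.ofReal_toReal (measure_ne_top _ _)).symm
    rw [h2, h1]
    simp [gSA, Nat.centralBinom]
  constructor
  · rw [hgt, hval]
  · refine le_antisymm ?_ ?_
    · set Z : Set Ω := ⋃ (k : ℕ) (_ : 1 ≤ k) (_ : k ≤ n), {ω | S k ω = 0} with hZ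
      have hZ0 : P Z = 0 := by
        refine measure_iUnion_null fun k => measure_iUnion_null fun h1 =>
          measure_iUnion_null fun h2 => ?_
        have hset : {ω | S k ω = 0} = T ⁻¹' {x : Fin n → ℝ | psumSA x k = psumSA x 0} := by
          ext ω
          simp only [Set.mem_setOf_eq, Set.mem_preimage]
          rw [hpsum ω k h2, psumSA_zero]
        rw [hset, ← Measure.map_apply hT
          (measurableSet_eq_fun measurable_psumSA measurable_psumSA), hmap]
        exact nuSA_interval_atom hatomμ h1 h2
      have hsub : {ω | ∀ k, 1 ≤ k → k ≤ n → 0 ≤ S k ω}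
          ⊆ {ω | ∀ k, 1 ≤ k → k ≤ n → 0 < S k ω} ∪ Z := by
        intro ω hω
        by_cases hz : ∃ k, 1 ≤ k ∧ k ≤ n ∧ S k ω = 0
        · obtain ⟨k, h1, h2, h3⟩ := hz
          exact Or.inr (Set.mem_iUnion.mpr ⟨k, Set.mem_iUnion.mpr ⟨h1,
            Set.mem_iUnion.mpr ⟨h2, h3⟩⟩⟩)
        · push_neg at hz
          exact Or.inl fun k h1 h2 =>
            lt_of_le_of_ne (hω k h1 h2) (fun heq => hz k h1 h2 heq.symm)
      calc P {ω | ∀ k, 1 ≤ k → k ≤ n → 0 ≤ S k ω}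
          ≤ P ({ω | ∀ k, 1 ≤ k → k ≤ n → 0 < S k ω} ∪ Z) := measure_mono hsub
        _ ≤ P {ω | ∀ k, 1 ≤ k → k ≤ n → 0 < S k ω} + P Z := measure_union_le _ _
        _ = ENNReal.ofReal ((Nat.choose (2 * n) n : ℝ) / 4 ^ n) := by
            rw [hZ0, add_zero, hgt, hval]
    · rw [← hval, ← hgt]
      exact measure_mono fun ω h k h1 h2 => le_of_lt (h k h1 h2)

end
end

section
/- Let (ξᵢ)_{i≥1} be i.i.d. real random variables whose common distribution is symmetric (ξ₁ and −ξ₁ have the same law) and atomless. Then P(S_n ≥ 0) = 1/2 for every n ≥ 1, and the generating function of the first weak ascending ladder epoch T₁ := inf{n ≥ 1 : S_n ≥ S_j for all 0 ≤ j < n} satisfies E[s^{T₁} 1_{T₁ < ∞}] = 1 − √(1 − s) for every s ∈ [0,1). -/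
set_option linter.unusedSectionVars false
set_option linter.unnecessarySeqFocus false
set_option maxHeartbeats 1000000

open MeasureTheory ProbabilityTheory

namespace LadderAux

/-! ### Path predicates -/

def wkLE (g : ℕ → ℝ) (m : ℕ) : Prop := ∀ j < m, g j ≤ g m
def sMin (g : ℕ → ℝ) (m : ℕ) : Prop := ∀ j < m, g m < g j
def sMax (g : ℕ → ℝ) (m : ℕ) : Prop := ∀ j < m, g j < g m
def noLad (g : ℕ → ℝ) (n : ℕ) : Prop := ∀ m, 1 ≤ m → m ≤ n → ¬ wkLE g m
def firstLad (g : ℕ → ℝ) (k : ℕ) : Prop := wkLE g k ∧ ∀ m, 1 ≤ m → m < k → ¬ wkLE g m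
def firstSD (g : ℕ → ℝ) (k : ℕ) : Prop := sMin g k ∧ ∀ m, 1 ≤ m → m < k → ¬ sMin g m
def firstSA (g : ℕ → ℝ) (k : ℕ) : Prop := sMax g k ∧ ∀ m, 1 ≤ m → m < k → ¬ sMax g m

/-! ### Congruence lemmas -/

lemma wkLE_congr {g g' : ℕ → ℝ} {m : ℕ} (h : ∀ j ≤ m, g j = g' j) :
    wkLE g m ↔ wkLE g' m := by
  unfold wkLE
  constructor <;> intro H j hj <;>
    [rw [← h j hj.le, ← h m le_rfl]; rw [h j hj.le, h m le_rfl]] <;> exact H j hj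

lemma sMin_congr {g g' : ℕ → ℝ} {m : ℕ} (h : ∀ j ≤ m, g j = g' j) :
    sMin g m ↔ sMin g' m := by
  unfold sMin
  constructor <;> intro H j hj <;>
    [rw [← h j hj.le, ← h m le_rfl]; rw [h j hj.le, h m le_rfl]] <;> exact H j hj

lemma noLad_congr {g g' : ℕ → ℝ} {n : ℕ} (h : ∀ j ≤ n, g j = g' j) :
    noLad g n ↔ noLad g' n := by
  unfold noLad
  refine forall_congr' fun m => ?_
  by_cases h1 : 1 ≤ m
  · by_cases h2 : m ≤ n
    · simp only [h1, h2, true_implies]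
      rw [wkLE_congr (fun j hj => h j (hj.trans h2))]
    · simp [h2]
  · simp [h1]

lemma firstSD_congr {g g' : ℕ → ℝ} {k : ℕ} (h : ∀ j ≤ k, g j = g' j) :
    firstSD g k ↔ firstSD g' k := by
  unfold firstSD
  rw [sMin_congr h]
  refine and_congr_right fun _ => forall_congr' fun m => ?_
  by_cases h1 : 1 ≤ m
  · by_cases h2 : m < k
    · simp only [h1, h2, true_implies]
      rw [sMin_congr (fun j hj => h j (hj.trans h2.le))]
    · simp [h2]
  · simp [h1]

lemma firstLad_congr {g g' : ℕ → ℝ} {k : ℕ} (h : ∀ j ≤ k, g j = g' j) :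
    firstLad g k ↔ firstLad g' k := by
  unfold firstLad
  rw [wkLE_congr h]
  refine and_congr_right fun _ => forall_congr' fun m => ?_
  by_cases h1 : 1 ≤ m
  · by_cases h2 : m < k
    · simp only [h1, h2, true_implies]
      rw [wkLE_congr (fun j hj => h j (hj.trans h2.le))]
    · simp [h2]
  · simp [h1]

/-! ### Pointwise combinatorial lemmas -/

lemma noLad_rev_iff (f : ℕ → ℝ) (n : ℕ) :
    noLad (fun m => f n - f (n - m)) n ↔ sMin f n := by
  constructor
  · intro h
    have dual : ∀ k < n, ∃ i, k < i ∧ i ≤ n ∧ f i < f k := by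
      intro k hk
      have hm : ¬ wkLE (fun m => f n - f (n - m)) (n - k) :=
        h (n - k) (by omega) (by omega)
      unfold wkLE at hm
      push_neg at hm
      obtain ⟨j, hj, hlt⟩ := hm
      refine ⟨n - j, by omega, by omega, ?_⟩
      have hnk : n - (n - k) = k := by omega
      rw [hnk] at hlt
      linarith
    have aux : ∀ d, ∀ k, k + d = n → f n ≤ f k := by
      intro d
      induction d using Nat.strong_induction_on with
      | _ d ih =>
        intro k hk
        rcases Nat.eq_zero_or_pos d with rfl | hd
        · have : k = n := by omega
          subst this; exact le_rfl
        · obtain ⟨i, hki, hin, hfi⟩ := dual k (by omega)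
          have : f n ≤ f i := ih (n - i) (by omega) i (by omega)
          linarith
    intro j hj
    obtain ⟨i, hji, hin, hfi⟩ := dual j hj
    have : f n ≤ f i := aux (n - i) i (by omega)
    linarith
  · intro h m h1 hmn hwk
    have h0 := hwk 0 h1
    simp only [Nat.sub_zero, sub_self] at h0
    have : f n < f (n - m) := h (n - m) (by omega)
    linarith

lemma firstSD_unique {f : ℕ → ℝ} {k k' : ℕ} (hk : firstSD f k) (hk' : firstSD f k')
    (h1 : 1 ≤ k) (h1' : 1 ≤ k') : k = k' := by
  by_contra hne
  rcases Nat.lt_or_ge k k' with h | h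
  · exact hk'.2 k h1 h hk.1
  · exact hk.2 k' h1' (by omega) hk'.1

lemma sMin_decomp (f : ℕ → ℝ) (n : ℕ) (hn : 1 ≤ n) :
    sMin f n ↔ ∃ k, (1 ≤ k ∧ k ≤ n) ∧ firstSD f k ∧
      sMin (fun j => f (k + j) - f k) (n - k) := by
  constructor
  · intro h
    have hne : {m : ℕ | 1 ≤ m ∧ sMin f m}.Nonempty := ⟨n, hn, h⟩
    set k := sInf {m : ℕ | 1 ≤ m ∧ sMin f m} with hkdef
    have hkmem : 1 ≤ k ∧ sMin f k := Nat.sInf_mem hne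
    have hkn : k ≤ n := Nat.sInf_le ⟨hn, h⟩
    refine ⟨k, ⟨hkmem.1, hkn⟩, ⟨hkmem.2, fun m hm1 hmk hsm => ?_⟩, ?_⟩
    · have : k ≤ m := Nat.sInf_le (show m ∈ {m : ℕ | 1 ≤ m ∧ sMin f m} from ⟨hm1, hsm⟩)
      omega
    · intro j hj
      have h1 : f n < f (k + j) := h (k + j) (by omega)
      have hkn' : k + (n - k) = n := by omega
      simp only [hkn']
      linarith
  · rintro ⟨k, ⟨h1, hkn⟩, ⟨hsk, -⟩, hsh⟩
    have hfnk : k < n → f n < f k := by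
      intro hlt
      have := hsh 0 (by omega)
      simp only [Nat.add_zero] at this
      have hkn' : k + (n - k) = n := by omega
      rw [hkn'] at this
      linarith
    intro j hj
    rcases Nat.lt_or_ge j k with hjk | hjk
    · rcases Nat.lt_or_ge k n with hlt | hge
      · exact (hfnk hlt).trans (hsk j hjk)
      · have : k = n := by omega
        subst this
        exact hsk j hjk
    · have hj' : j - k < n - k := by omega
      have := hsh (j - k) hj'
      simp only at this
      have hkn' : k + (n - k) = n := by omega
      have hkj' : k + (j - k) = j := by omega
      rw [hkn', hkj'] at this
      linarith

/-! ### Symmetry and ties -/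

lemma sMin_neg (f : ℕ → ℝ) (m : ℕ) : sMin (fun j => -f j) m ↔ sMax f m := by
  unfold sMin sMax
  exact forall₂_congr fun j hj => neg_lt_neg_iff

lemma firstSD_neg (f : ℕ → ℝ) (k : ℕ) : firstSD (fun j => -f j) k ↔ firstSA f k := by
  unfold firstSD firstSA
  simp only [sMin_neg]

lemma wkLE_iff_sMax {f : ℕ → ℝ} {k : ℕ} (hne : ∀ a b, a < b → b ≤ k → f a ≠ f b)
    {m : ℕ} (hm : m ≤ k) : wkLE f m ↔ sMax f m :=
  ⟨fun h j hj => lt_of_le_of_ne (h j hj) (hne j m hj hm),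
   fun h j hj => (h j hj).le⟩

lemma firstLad_iff_firstSA {f : ℕ → ℝ} {k : ℕ}
    (hne : ∀ a b, a < b → b ≤ k → f a ≠ f b) :
    firstLad f k ↔ firstSA f k := by
  unfold firstLad firstSA
  rw [wkLE_iff_sMax hne le_rfl]
  refine and_congr_right fun _ => forall_congr' fun m => ?_
  by_cases h1 : 1 ≤ m
  · by_cases h2 : m < k
    · simp only [h1, h2, true_implies]
      rw [wkLE_iff_sMax hne h2.le]
    · simp [h2]
  · simp [h1]

/-! ### Measurability -/

section meas
variable {α : Type*} [MeasurableSpace α] {g : ℕ → α → ℝ}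

lemma measurableSet_wkLE (hg : ∀ m, Measurable (g m)) (m : ℕ) :
    MeasurableSet {a | wkLE (fun j => g j a) m} := by
  have : {a | wkLE (fun j => g j a) m} = ⋂ j, ⋂ (_ : j < m), {a | g j a ≤ g m a} := by
    ext a; simp [wkLE]
  rw [this]
  exact MeasurableSet.iInter fun j => MeasurableSet.iInter fun _ =>
    measurableSet_le (hg j) (hg m)

lemma measurableSet_sMin (hg : ∀ m, Measurable (g m)) (m : ℕ) :
    MeasurableSet {a | sMin (fun j => g j a) m} := by
  have : {a | sMin (fun j => g j a) m} = ⋂ j, ⋂ (_ : j < m), {a | g m a < g j a} := by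
    ext a; simp [sMin]
  rw [this]
  exact MeasurableSet.iInter fun j => MeasurableSet.iInter fun _ =>
    measurableSet_lt (hg m) (hg j)

lemma measurableSet_noLad (hg : ∀ m, Measurable (g m)) (n : ℕ) :
    MeasurableSet {a | noLad (fun j => g j a) n} := by
  have : {a | noLad (fun j => g j a) n}
      = ⋂ m, ⋂ (_ : 1 ≤ m), ⋂ (_ : m ≤ n), {a | wkLE (fun j => g j a) m}ᶜ := by
    ext a; simp [noLad]
  rw [this]
  exact MeasurableSet.iInter fun m => MeasurableSet.iInter fun _ =>
    MeasurableSet.iInter fun _ => (measurableSet_wkLE hg m).compl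

lemma measurableSet_firstLad (hg : ∀ m, Measurable (g m)) (k : ℕ) :
    MeasurableSet {a | firstLad (fun j => g j a) k} := by
  have : {a | firstLad (fun j => g j a) k}
      = {a | wkLE (fun j => g j a) k} ∩
        ⋂ m, ⋂ (_ : 1 ≤ m), ⋂ (_ : m < k), {a | wkLE (fun j => g j a) m}ᶜ := by
    ext a; simp [firstLad]
  rw [this]
  exact (measurableSet_wkLE hg k).inter <| MeasurableSet.iInter fun m =>
    MeasurableSet.iInter fun _ => MeasurableSet.iInter fun _ => (measurableSet_wkLE hg m).compl

lemma measurableSet_firstSD (hg : ∀ m, Measurable (g m)) (k : ℕ) :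
    MeasurableSet {a | firstSD (fun j => g j a) k} := by
  have : {a | firstSD (fun j => g j a) k}
      = {a | sMin (fun j => g j a) k} ∩
        ⋂ m, ⋂ (_ : 1 ≤ m), ⋂ (_ : m < k), {a | sMin (fun j => g j a) m}ᶜ := by
    ext a; simp [firstSD]
  rw [this]
  exact (measurableSet_sMin hg k).inter <| MeasurableSet.iInter fun m =>
    MeasurableSet.iInter fun _ => MeasurableSet.iInter fun _ => (measurableSet_sMin hg m).compl

end meas

/-! ### A helper for measure equality off a null set -/

lemma measure_eq_of_eq_off_null {Ω : Type*} [MeasurableSpace Ω] (P : Measure Ω)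
    {A B t : Set Ω} (ht : P t = 0) (h : ∀ ω, ω ∉ t → (ω ∈ A ↔ ω ∈ B)) : P A = P B := by
  have key : ∀ C D : Set Ω, (∀ ω, ω ∉ t → (ω ∈ C ↔ ω ∈ D)) → P C ≤ P D := by
    intro C D hCD
    calc P C ≤ P (D ∪ t) := by
          refine measure_mono fun ω hω => ?_
          by_cases hωt : ω ∈ t
          · exact Or.inr hωt
          · exact Or.inl ((hCD ω hωt).mp hω)
      _ ≤ P D + P t := measure_union_le _ _
      _ = P D := by rw [ht, add_zero]
  exact le_antisymm (key A B h) (key B A fun ω hω => (h ω hω).symm)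

/-! ### Vector partial sums -/

def W (n : ℕ) (x : Fin n → ℝ) (m : ℕ) : ℝ :=
  ∑ i ∈ Finset.range m, if h : i < n then x ⟨i, h⟩ else 0

lemma measurable_W (n m : ℕ) : Measurable (fun x : Fin n → ℝ => W n x m) := by
  unfold W
  apply Finset.measurable_sum
  intro i _
  by_cases h : i < n
  · simp only [dif_pos h]; exact measurable_pi_apply _
  · simp only [dif_neg h]; exact measurable_const

lemma W_apply {l : ℕ} (x : Fin l → ℝ) (f : ℕ → ℝ) (hxf : ∀ i : Fin l, x i = f ↑i)
    {m : ℕ} (h : m ≤ l) : W l x m = ∑ i ∈ Finset.range m, f i := by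
  unfold W
  refine Finset.sum_congr rfl fun i hi => ?_
  have hil : i < l := lt_of_lt_of_le (Finset.mem_range.mp hi) h
  rw [dif_pos hil, hxf ⟨i, hil⟩]

/-! ### Joint law is the product measure -/

section law

variable {Ω : Type*} [MeasurableSpace Ω] (P : Measure Ω) [IsProbabilityMeasure P]

lemma law_pi (η : ℕ → Ω → ℝ) (hmeas : ∀ i, Measurable (η i))
    (hindep : iIndepFun η P)
    (μ : Measure ℝ) [IsProbabilityMeasure μ] (hlaw : ∀ i, Measure.map (η i) P = μ)
    {l : ℕ} (c : Fin l → ℕ) (hc : Function.Injective c) :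
    Measure.map (fun ω (i : Fin l) => η (c i) ω) P = Measure.pi (fun _ => μ) := by
  classical
  have hvec : Measurable (fun ω (i : Fin l) => η (c i) ω) :=
    measurable_pi_lambda _ fun i => hmeas (c i)
  refine (Measure.pi_eq (μ := fun _ : Fin l => μ) fun s hs => ?_).symm
  rw [Measure.map_apply hvec (MeasurableSet.univ_pi hs)]
  set sets : ℕ → Set ℝ := fun m => ⋃ (i : Fin l) (_ : c i = m), s i with hsets_def
  have hsets_meas : ∀ m, MeasurableSet (sets m) := fun m =>
    MeasurableSet.iUnion fun i => MeasurableSet.iUnion fun _ => hs i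
  have hsets_c : ∀ i, sets (c i) = s i := by
    intro i
    ext y
    simp only [hsets_def, Set.mem_iUnion]
    constructor
    · rintro ⟨i', h', hy⟩
      cases hc h'
      exact hy
    · intro hy
      exact ⟨i, rfl, hy⟩
  have key := hindep.measure_inter_preimage_eq_mul (Finset.image c Finset.univ)
    (sets := sets) (fun m _ => hsets_meas m)
  have hpre : ((fun ω (i : Fin l) => η (c i) ω) ⁻¹' Set.pi Set.univ s)
      = ⋂ m ∈ Finset.image c Finset.univ, η m ⁻¹' sets m := by
    ext ω
    simp only [Set.mem_preimage, Set.mem_pi, Set.mem_univ, forall_true_left, Set.mem_iInter,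
      Finset.mem_image, Finset.mem_univ, true_and]
    constructor
    · rintro h m ⟨i, rfl⟩
      rw [hsets_c i]
      exact h i
    · intro h i
      have := h (c i) ⟨i, rfl⟩
      rwa [hsets_c i] at this
  rw [hpre, key, Finset.prod_image (fun i _ j _ h => hc h)]
  refine Finset.prod_congr rfl fun i _ => ?_
  rw [hsets_c i, ← hlaw (c i), Measure.map_apply (hmeas (c i)) (hs i)]

lemma prob_pred (η : ℕ → Ω → ℝ) (hmeas : ∀ i, Measurable (η i))
    (hindep : iIndepFun η P)
    (μ : Measure ℝ) [IsProbabilityMeasure μ] (hlaw : ∀ i, Measure.map (η i) P = μ)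
    {l : ℕ} (c : Fin l → ℕ) (hc : Function.Injective c)
    {A : Set (Fin l → ℝ)} (hA : MeasurableSet A) :
    P {ω | (fun i => η (c i) ω) ∈ A} = Measure.pi (fun _ : Fin l => μ) A := by
  rw [← law_pi P η hmeas hindep μ hlaw c hc,
    Measure.map_apply (measurable_pi_lambda _ fun i => hmeas (c i)) hA]
  rfl

lemma null_sum (ξ : ℕ → Ω → ℝ) (hmeas : ∀ i, Measurable (ξ i))
    (hindep : iIndepFun ξ P)
    (hident : ∀ i, Measure.map (ξ i) P = Measure.map (ξ 0) P)
    (hatomless : ∀ a : ℝ, P {ω | ξ 0 ω = a} = 0)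
    (a b : ℕ) (hab : a < b) (c : ℝ) :
    P {ω | ∑ i ∈ Finset.Ico a b, ξ i ω = c} = 0 := by
  classical
  set Y : Ω → ℝ := fun ω => ∑ i ∈ Finset.Ico (a+1) b, ξ i ω with hYdef
  have hYmeas : Measurable Y := Finset.measurable_sum _ fun i _ => hmeas i
  have hatom : ∀ i, ∀ t : ℝ, P {ω | ξ i ω = t} = 0 := by
    intro i t
    have h1 : P {ω | ξ i ω = t} = Measure.map (ξ i) P {t} := by
      rw [Measure.map_apply (hmeas i) (measurableSet_singleton t)]
      rfl
    have h2 : P {ω | ξ 0 ω = t} = Measure.map (ξ 0) P {t} := by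
      rw [Measure.map_apply (hmeas 0) (measurableSet_singleton t)]
      rfl
    rw [h1, hident i, ← h2, hatomless t]
  have hsum : ∀ ω, ∑ i ∈ Finset.Ico a b, ξ i ω = Y ω + ξ a ω := by
    intro ω
    rw [← Finset.insert_Ico_add_one_left_eq_Ico hab, Finset.sum_insert (by simp)]
    ring
  have hI : IndepFun Y (ξ a) P := by
    have h := hindep.indepFun_finsetSum_of_notMem hmeas
      (s := Finset.Ico (a+1) b) (i := a) (by simp)
    have he : (∑ j ∈ Finset.Ico (a+1) b, ξ j) = Y := by
      funext ω
      simp [hYdef, Finset.sum_apply]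
    rwa [he] at h
  have hmap : Measure.map (fun ω => (Y ω, ξ a ω)) P
      = (Measure.map Y P).prod (Measure.map (ξ a) P) :=
    (indepFun_iff_map_prod_eq_prod_map_map hYmeas.aemeasurable
      (hmeas a).aemeasurable).mp hI
  have hsetmeas : MeasurableSet {p : ℝ × ℝ | p.1 + p.2 = c} :=
    (measurable_fst.add measurable_snd) (measurableSet_singleton c)
  have heq : {ω | ∑ i ∈ Finset.Ico a b, ξ i ω = c}
      = (fun ω => (Y ω, ξ a ω)) ⁻¹' {p : ℝ × ℝ | p.1 + p.2 = c} := by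
    ext ω
    simp [hsum ω]
  rw [heq, ← Measure.map_apply (hYmeas.prodMk (hmeas a)) hsetmeas, hmap,
    Measure.prod_apply hsetmeas]
  have hslice : ∀ y : ℝ,
      (Measure.map (ξ a) P) (Prod.mk y ⁻¹' {p : ℝ × ℝ | p.1 + p.2 = c}) = 0 := by
    intro y
    have h : (Prod.mk y ⁻¹' {p : ℝ × ℝ | p.1 + p.2 = c}) = {c - y} := by
      ext t
      simp only [Set.mem_preimage, Set.mem_setOf_eq, Set.mem_singleton_iff]
      constructor <;> intro h <;> linarith
    rw [h, Measure.map_apply (hmeas a) (measurableSet_singleton _)]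
    exact hatom a (c - y)
  simp only [hslice]
  simp

end law

/-! ### The generating function computation -/

lemma genfun_calc (a ρ : ℕ → ℝ) (s : ℝ) (hs0 : 0 ≤ s) (hs1 : s < 1)
    (ha0 : ∀ k, 0 ≤ a k)
    (hρ0 : ρ 0 = 1)
    (hρnn : ∀ n, 0 ≤ ρ n)
    (hr : ∀ n, ρ n = 1 - ∑ k ∈ Finset.Icc 1 n, a k)
    (hren : ∀ n, 1 ≤ n → ρ n = ∑ k ∈ Finset.Icc 1 n, a k * ρ (n - k)) :
    ∑' k, (if k = 0 then (0:ℝ) else s ^ k) * a k = 1 - Real.sqrt (1 - s) := by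
  classical
  set aa : ℕ → ℝ := fun k => if k = 0 then 0 else a k with haa_def
  set u : ℕ → ℝ := fun k => aa k * s ^ k with hu_def
  set v : ℕ → ℝ := fun m => ρ m * s ^ m with hv_def
  have haa_nn : ∀ k, 0 ≤ aa k := by
    intro k
    by_cases h : k = 0 <;> simp [haa_def, h, ha0 k]
  have hρ_le_one : ∀ n, ρ n ≤ 1 := by
    intro n
    rw [hr n]
    have : 0 ≤ ∑ k ∈ Finset.Icc 1 n, a k := Finset.sum_nonneg fun k _ => ha0 k
    linarith
  have hIccsum_le : ∀ n, ∑ k ∈ Finset.Icc 1 n, a k ≤ 1 := by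
    intro n
    have := hρnn n
    rw [hr n] at this
    linarith
  have hrangeaa : ∀ n, ∑ k ∈ Finset.range (n + 1), aa k = ∑ k ∈ Finset.Icc 1 n, a k := by
    intro n
    rw [Finset.range_eq_Ico, ← Finset.insert_Ico_add_one_left_eq_Ico (Nat.succ_pos n : 0 < n + 1),
      Finset.sum_insert (by simp), Nat.succ_eq_add_one, Finset.Ico_add_one_right_eq_Icc]
    simp only [haa_def, if_pos rfl, zero_add]
    refine Finset.sum_congr rfl fun k hk => ?_
    have hk1 : 1 ≤ k := (Finset.mem_Icc.mp hk).1
    rw [if_neg (by omega)]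
  have hsum_aa : Summable aa := by
    apply summable_of_sum_range_le haa_nn (c := 1)
    intro n
    rcases n with _ | n
    · simp
    · rw [hrangeaa n]
      exact hIccsum_le n
  have hspow_nn : ∀ k : ℕ, (0:ℝ) ≤ s ^ k := fun k => pow_nonneg hs0 k
  have hspow_le : ∀ k : ℕ, s ^ k ≤ 1 := fun k => pow_le_one₀ hs0 hs1.le
  have hu_nn : ∀ k, 0 ≤ u k := fun k => mul_nonneg (haa_nn k) (hspow_nn k)
  have hv_nn : ∀ m, 0 ≤ v m := fun m => mul_nonneg (hρnn m) (hspow_nn m)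
  have hsum_u : Summable u := by
    refine hsum_aa.of_nonneg_of_le hu_nn fun k => ?_
    calc aa k * s ^ k ≤ aa k * 1 := mul_le_mul_of_nonneg_left (hspow_le k) (haa_nn k)
      _ = aa k := mul_one _
  have hsum_v : Summable v := by
    refine (summable_geometric_of_lt_one hs0 hs1).of_nonneg_of_le hv_nn fun m => ?_
    calc ρ m * s ^ m ≤ 1 * s ^ m :=
          mul_le_mul_of_nonneg_right (hρ_le_one m) (hspow_nn m)
      _ = s ^ m := one_mul _
  set A : ℝ := ∑' k, u k with hA_def
  set R : ℝ := ∑' m, v m with hR_def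
  have hR_nn : 0 ≤ R := tsum_nonneg hv_nn
  have hprod : Summable (fun x : ℕ × ℕ => u x.1 * v x.2) :=
    hsum_u.mul_of_nonneg hsum_v hu_nn hv_nn
  have hδ : Summable (fun n : ℕ => if n = 0 then (1:ℝ) else 0) :=
    (hasSum_ite_eq 0 (1:ℝ)).summable
  have hAR : A * R = R - 1 := by
    rw [hA_def, hR_def, hsum_u.tsum_mul_tsum_eq_tsum_sum_antidiagonal hsum_v hprod]
    have hterm : ∀ n : ℕ, ∑ kl ∈ Finset.HasAntidiagonal.antidiagonal n, u kl.1 * v kl.2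
        = v n - (if n = 0 then (1:ℝ) else 0) := by
      intro n
      rw [Finset.Nat.sum_antidiagonal_eq_sum_range_succ_mk]
      rcases Nat.eq_zero_or_pos n with rfl | hn
      · simp [hu_def, haa_def, hv_def, hρ0]
      · have hsplit : ∀ i ∈ Finset.range (n + 1),
            u i * v (n - i) = (aa i * ρ (n - i)) * s ^ n := by
          intro i hi
          have hi' : i ≤ n := by
            have := Finset.mem_range.mp hi; omega
          have hss : s ^ i * s ^ (n - i) = s ^ n := by
            rw [← pow_add]
            congr 1
            omega
          simp only [hu_def, hv_def]
          rw [← hss]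
          ring
        rw [Finset.sum_congr rfl hsplit, ← Finset.sum_mul]
        have h2 : ∑ i ∈ Finset.range (n + 1), aa i * ρ (n - i)
            = ∑ i ∈ Finset.Icc 1 n, a i * ρ (n - i) := by
          rw [Finset.range_eq_Ico, ← Finset.insert_Ico_add_one_left_eq_Ico (Nat.succ_pos n : 0 < n + 1),
            Finset.sum_insert (by simp), Nat.succ_eq_add_one, Finset.Ico_add_one_right_eq_Icc]
          simp only [haa_def, if_pos rfl, zero_mul, zero_add]
          refine Finset.sum_congr rfl fun k hk => ?_
          have hk1 : 1 ≤ k := (Finset.mem_Icc.mp hk).1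
          rw [if_neg (by omega)]
        rw [h2, ← hren n hn, if_neg (by omega), sub_zero, hv_def]
    rw [tsum_congr hterm, hsum_v.tsum_sub hδ, (hasSum_ite_eq 0 (1:ℝ)).tsum_eq]
  have hρdiff : ∀ m : ℕ, ρ (m + 1) - ρ m = -(a (m + 1)) := by
    intro m
    rw [hr (m + 1), hr m,
      Finset.sum_Icc_succ_top (Nat.one_le_iff_ne_zero.mpr (Nat.succ_ne_zero m))]
    ring
  have hsum_u' : Summable (fun k => u (k + 1)) := (summable_nat_add_iff 1).mpr hsum_u
  have hsum_v' : Summable (fun m => v (m + 1)) := (summable_nat_add_iff 1).mpr hsum_v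
  have hsum_sv : Summable (fun m => s * v m) := hsum_v.mul_left s
  have hA_shift : A = ∑' k, u (k + 1) := by
    rw [hA_def, hsum_u.tsum_eq_zero_add]
    simp [hu_def, haa_def]
  have hR_shift : R = 1 + ∑' m, v (m + 1) := by
    rw [hR_def, hsum_v.tsum_eq_zero_add]
    simp [hv_def, hρ0]
  have hsR : s * R = ∑' m, s * v m := by rw [hR_def, tsum_mul_left]
  have hkey : ∑' (m : ℕ), (u (m + 1) + (v (m + 1) - s * v m)) = 0 := by
    have hterm : ∀ m : ℕ, u (m + 1) + (v (m + 1) - s * v m) = 0 := by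
      intro m
      have hd := hρdiff m
      simp only [hu_def, hv_def, haa_def, if_neg (Nat.succ_ne_zero m)]
      have hpow : s * s ^ m = s ^ (m + 1) := (pow_succ' s m).symm
      have h3 : s * (ρ m * s ^ m) = ρ m * s ^ (m + 1) := by rw [← hpow]; ring
      rw [h3]
      have h2 : ρ (m + 1) = ρ m - a (m + 1) := by linarith
      rw [h2]
      ring
    rw [tsum_congr hterm]
    simp
  have hid1 : 1 - A = (1 - s) * R := by
    rw [hsum_u'.tsum_add (hsum_v'.sub hsum_sv), hsum_v'.tsum_sub hsum_sv] at hkey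
    rw [← hA_shift] at hkey
    have h2 : ∑' m, v (m + 1) = R - 1 := by rw [hR_shift]; ring
    rw [h2, ← hsR] at hkey
    linarith
  have hR1A : R * (1 - A) = 1 := by
    have h : R * (1 - A) = R - A * R := by ring
    rw [h, hAR]
    ring
  have hsq : (1 - A) ^ 2 = 1 - s := by
    calc (1 - A) ^ 2 = ((1 - s) * R) * (1 - A) := by rw [← hid1]; ring
      _ = (1 - s) * (R * (1 - A)) := by ring
      _ = 1 - s := by rw [hR1A]; ring
  have h1A_nn : 0 ≤ 1 - A := by
    rw [hid1]
    exact mul_nonneg (by linarith) hR_nn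
  have hsqrt : Real.sqrt (1 - s) = 1 - A := by
    rw [← hsq, Real.sqrt_sq h1A_nn]
  have hgoal : ∑' k, (if k = 0 then (0:ℝ) else s ^ k) * a k = A := by
    rw [hA_def]
    refine tsum_congr fun k => ?_
    by_cases h : k = 0 <;> simp [hu_def, haa_def, h] <;> ring
  rw [hgoal, hsqrt]
  ring

end LadderAux

open LadderAux

/-- For an i.i.d. sequence with symmetric atomless marginal law: `P(S_n ≥ 0) = 1/2` for all
`n ≥ 1`, and the generating function of the first weak ascending ladder epoch
`T₁ = inf{n ≥ 1 : S_n ≥ S_j ∀ 0 ≤ j < n}` (with `inf ∅ = ∞`, encoded by the value `0`)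
is `E[s^{T₁} 1_{T₁ < ∞}] = 1 - √(1-s)` for `s ∈ [0,1)`. -/
theorem ladder_epoch_symmetric_case
    {Ω : Type*} [MeasurableSpace Ω] (P : Measure Ω) [IsProbabilityMeasure P]
    (ξ : ℕ → Ω → ℝ)
    (hmeas : ∀ i, Measurable (ξ i))
    (hindep : iIndepFun ξ P)
    (hident : ∀ i, Measure.map (ξ i) P = Measure.map (ξ 0) P)
    (hsymm : Measure.map (ξ 0) P = Measure.map (fun ω => -(ξ 0 ω)) P)
    (hatomless : ∀ a : ℝ, P {ω | ξ 0 ω = a} = 0)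
    (S : ℕ → Ω → ℝ) (hS : ∀ k ω, S k ω = ∑ i ∈ Finset.range k, ξ i ω)
    (T : Ω → ℕ) (hT : ∀ ω, T ω = sInf {m : ℕ | 1 ≤ m ∧ ∀ j < m, S j ω ≤ S m ω}) :
    (∀ n : ℕ, 1 ≤ n → P {ω | 0 ≤ S n ω} = 1 / 2) ∧
    (∀ s : ℝ, 0 ≤ s → s < 1 →
      ∫ ω, (if T ω = 0 then (0 : ℝ) else s ^ T ω) ∂P = 1 - Real.sqrt (1 - s)) := by
  classical
  -- basic facts
  have hSmeas : ∀ m, Measurable (S m) := by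
    intro m
    have h : S m = fun ω => ∑ i ∈ Finset.range m, ξ i ω := funext fun ω => hS m ω
    rw [h]
    exact Finset.measurable_sum _ fun i _ => hmeas i
  set μ : Measure ℝ := Measure.map (ξ 0) P with hμ_def
  haveI hμP : IsProbabilityMeasure μ := Measure.isProbabilityMeasure_map (hmeas 0).aemeasurable
  have hlaw : ∀ i, Measure.map (ξ i) P = μ := hident
  have hmeasn : ∀ i, Measurable (fun ω => -(ξ i ω)) := fun i => (hmeas i).neg
  have hindepn : iIndepFun
      (fun i ω => -(ξ i ω)) P :=
    hindep.comp (fun _ => (Neg.neg : ℝ → ℝ)) (fun _ => measurable_neg)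
  have hmapneg : Measure.map (Neg.neg : ℝ → ℝ) μ = μ := by
    rw [hμ_def, Measure.map_map measurable_neg (hmeas 0)]
    exact hsymm.symm
  have hlawn : ∀ i, Measure.map (fun ω => -(ξ i ω)) P = μ := by
    intro i
    have h : (fun ω => -(ξ i ω)) = (Neg.neg : ℝ → ℝ) ∘ ξ i := rfl
    rw [h, ← Measure.map_map measurable_neg (hmeas i), hlaw i, hmapneg]
  have hstep : ∀ j (ω : Ω), S (j+1) ω = S j ω + ξ j ω := by
    intro j ω
    rw [hS, hS, Finset.sum_range_succ]
  have sum_shift : ∀ k m (ω : Ω),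
      ∑ i ∈ Finset.range m, ξ (k + i) ω = S (k + m) ω - S k ω := by
    intro k m ω
    induction m with
    | zero => simp
    | succ m ih =>
      rw [Finset.sum_range_succ, ih, show k + (m + 1) = (k + m) + 1 from rfl,
        hstep (k + m) ω]
      ring
  have sum_rev : ∀ n m (ω : Ω), m ≤ n →
      ∑ i ∈ Finset.range m, ξ (n - 1 - i) ω = S n ω - S (n - m) ω := by
    intro n m ω
    induction m with
    | zero => intro _; simp
    | succ m ih =>
      intro hm
      have hm' : m ≤ n := by omega
      have e2 : n - 1 - m = n - (m+1) := by omega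
      have e1 : n - m = (n - (m+1)) + 1 := by omega
      rw [Finset.sum_range_succ, ih hm', e2, e1, hstep (n - (m+1)) ω]
      ring
  -- Part 1
  have part1 : ∀ n : ℕ, 1 ≤ n → P {ω | 0 ≤ S n ω} = 1 / 2 := by
    intro n hn
    set An : Set (Fin n → ℝ) := {x | 0 ≤ W n x n} with hAn_def
    have hAn : MeasurableSet An := measurableSet_le measurable_const (measurable_W n n)
    have e1 : {ω | 0 ≤ S n ω} = {ω | (fun i : Fin n => ξ ↑i ω) ∈ An} := by
      ext ω
      simp only [Set.mem_setOf_eq, hAn_def]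
      rw [W_apply _ (fun j => ξ j ω) (fun i => rfl) le_rfl, ← hS n ω]
    have h1 : P {ω | 0 ≤ S n ω} = Measure.pi (fun _ : Fin n => μ) An := by
      rw [e1]
      exact prob_pred P ξ hmeas hindep μ hlaw (fun i : Fin n => (i : ℕ))
        (fun i j h => Fin.ext h) hAn
    have e2 : {ω | S n ω ≤ 0} = {ω | (fun i : Fin n => -(ξ ↑i ω)) ∈ An} := by
      ext ω
      simp only [Set.mem_setOf_eq, hAn_def]
      rw [W_apply _ (fun j => -(ξ j ω)) (fun i => rfl) le_rfl, Finset.sum_neg_distrib,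
        ← hS n ω]
      exact neg_nonneg.symm
    have h2 : P {ω | S n ω ≤ 0} = Measure.pi (fun _ : Fin n => μ) An := by
      rw [e2]
      exact prob_pred P (fun i ω => -(ξ i ω)) hmeasn hindepn μ hlawn
        (fun i : Fin n => (i : ℕ)) (fun i j h => Fin.ext h) hAn
    have hzero : P {ω | S n ω = 0} = 0 := by
      have e3 : {ω | S n ω = 0} = {ω | ∑ i ∈ Finset.Ico 0 n, ξ i ω = 0} := by
        ext ω
        rw [Set.mem_setOf_eq, Set.mem_setOf_eq, ← Finset.range_eq_Ico, ← hS n ω]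
      rw [e3]
      exact null_sum P ξ hmeas hindep hident hatomless 0 n hn 0
    have hunion : {ω | 0 ≤ S n ω} ∪ {ω | S n ω ≤ 0} = Set.univ := by
      ext ω
      simp only [Set.mem_union, Set.mem_setOf_eq, Set.mem_univ, iff_true]
      exact le_total 0 (S n ω)
    have hinter : {ω | 0 ≤ S n ω} ∩ {ω | S n ω ≤ 0} = {ω | S n ω = 0} := by
      ext ω
      simp only [Set.mem_inter_iff, Set.mem_setOf_eq]
      constructor
      · rintro ⟨ha, hb⟩; linarith
      · intro h; constructor <;> linarith
    have hsum2 : P {ω | 0 ≤ S n ω} + P {ω | 0 ≤ S n ω} = 1 := by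
      have hmi := measure_union_add_inter (μ := P) (t := {ω | S n ω ≤ 0})
        {ω | 0 ≤ S n ω} (measurableSet_le (hSmeas n) measurable_const)
      rw [hunion, hinter, hzero, measure_univ, add_zero] at hmi
      have h12 : P {ω | 0 ≤ S n ω} = P {ω | S n ω ≤ 0} := h1.trans h2.symm
      nth_rewrite 2 [h12]
      exact hmi.symm
    have hne : P {ω | 0 ≤ S n ω} ≠ ⊤ := measure_ne_top P _
    have ht : (P {ω | 0 ≤ S n ω}).toReal = 1 / 2 := by
      have h := congrArg ENNReal.toReal hsum2
      rw [ENNReal.toReal_add hne hne, ENNReal.toReal_one] at h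
      linarith
    refine (ENNReal.toReal_eq_toReal_iff' hne (by norm_num)).mp ?_
    rw [ht]
    norm_num
  refine ⟨part1, ?_⟩
  -- T events
  have hTk : ∀ k, 1 ≤ k → T ⁻¹' {k} = {ω | firstLad (fun m => S m ω) k} := by
    intro k hk
    ext ω
    simp only [Set.mem_preimage, Set.mem_singleton_iff, Set.mem_setOf_eq]
    rw [hT ω]
    constructor
    · intro h
      have hne : {m : ℕ | 1 ≤ m ∧ ∀ j < m, S j ω ≤ S m ω}.Nonempty := by
        by_contra hemp
        rw [Set.not_nonempty_iff_eq_empty] at hemp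
        rw [hemp, Nat.sInf_empty] at h
        omega
      have hmem := Nat.sInf_mem hne
      rw [h] at hmem
      refine ⟨hmem.2, fun m h1 hmk hw => ?_⟩
      have hle : sInf {m : ℕ | 1 ≤ m ∧ ∀ j < m, S j ω ≤ S m ω} ≤ m :=
        Nat.sInf_le ⟨h1, hw⟩
      rw [h] at hle
      omega
    · rintro ⟨hw, hmin⟩
      have hmem : k ∈ {m : ℕ | 1 ≤ m ∧ ∀ j < m, S j ω ≤ S m ω} := ⟨hk, hw⟩
      refine le_antisymm (Nat.sInf_le hmem) ?_
      by_contra hlt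
      push_neg at hlt
      have h2 := Nat.sInf_mem (⟨k, hmem⟩ :
        {m : ℕ | 1 ≤ m ∧ ∀ j < m, S j ω ≤ S m ω}.Nonempty)
      exact hmin _ h2.1 hlt h2.2
  have hT0c : ∀ n : ℕ,
      {ω | noLad (fun m => S m ω) n} = (⋃ k ∈ Finset.Icc 1 n, T ⁻¹' {k})ᶜ := by
    intro n
    ext ω
    rw [Set.mem_compl_iff]
    simp only [Set.mem_iUnion, Set.mem_preimage, Set.mem_singleton_iff, exists_prop,
      not_exists, not_and, Set.mem_setOf_eq]
    constructor
    · intro hnl k hkIcc hTk'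
      obtain ⟨hk1, hkn⟩ := Finset.mem_Icc.mp hkIcc
      rcases Set.eq_empty_or_nonempty {m : ℕ | 1 ≤ m ∧ ∀ j < m, S j ω ≤ S m ω} with he | hne
      · rw [hT ω, he, Nat.sInf_empty] at hTk'
        omega
      · have hmem := Nat.sInf_mem hne
        rw [← hT ω] at hmem
        exact hnl k hk1 hkn (hTk' ▸ hmem.2)
    · intro h m h1 hmn hw
      have hmem : m ∈ {m' : ℕ | 1 ≤ m' ∧ ∀ j < m', S j ω ≤ S m' ω} := ⟨h1, hw⟩
      have hmemInf := Nat.sInf_mem (⟨m, hmem⟩ :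
        {m' : ℕ | 1 ≤ m' ∧ ∀ j < m', S j ω ≤ S m' ω}.Nonempty)
      have hle := Nat.sInf_le hmem
      rw [← hT ω] at hmemInf hle
      exact h (T ω) (Finset.mem_Icc.mpr ⟨hmemInf.1, le_trans hle hmn⟩) rfl
  have hTmeas : Measurable T := by
    apply measurable_to_countable'
    intro k
    rcases Nat.eq_zero_or_pos k with rfl | hk
    · have h0 : T ⁻¹' {0} = (⋃ k' : ℕ, ⋃ (_ : 1 ≤ k'), T ⁻¹' {k'})ᶜ := by
        ext ω
        simp only [Set.mem_preimage, Set.mem_singleton_iff, Set.mem_compl_iff, Set.mem_iUnion]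
        constructor
        · rintro h ⟨k', hk', hk''⟩
          omega
        · intro h
          by_contra h0
          exact h ⟨T ω, by omega, rfl⟩
      rw [h0]
      refine (MeasurableSet.iUnion fun k' => MeasurableSet.iUnion fun hk' => ?_).compl
      rw [hTk k' hk']
      exact measurableSet_firstLad hSmeas k'
    · rw [hTk k hk]
      exact measurableSet_firstLad hSmeas k
  -- partition
  have hpart : ∀ n : ℕ,
      P {ω | noLad (fun m => S m ω) n} + ∑ k ∈ Finset.Icc 1 n, P (T ⁻¹' {k}) = 1 := by
    intro n
    have hUmeas : MeasurableSet (⋃ k ∈ Finset.Icc 1 n, T ⁻¹' {k}) :=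
      MeasurableSet.biUnion (Finset.countable_toSet _)
        (fun k _ => hTmeas (measurableSet_singleton k))
    have hdisj : (↑(Finset.Icc 1 n) : Set ℕ).PairwiseDisjoint (fun k => T ⁻¹' {k}) := by
      intro i _ j _ hij
      rw [Function.onFun, Set.disjoint_left]
      rintro ω hi hj
      rw [Set.mem_preimage, Set.mem_singleton_iff] at hi hj
      exact hij (hi.symm.trans hj)
    have hU : P (⋃ k ∈ Finset.Icc 1 n, T ⁻¹' {k}) = ∑ k ∈ Finset.Icc 1 n, P (T ⁻¹' {k}) :=
      measure_biUnion_finset hdisj (fun k _ => hTmeas (measurableSet_singleton k))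
    have hcompl := measure_add_measure_compl (μ := P) hUmeas
    rw [measure_univ, hU] at hcompl
    rw [hT0c n, add_comm]
    exact hcompl
  -- duality
  have hdual : ∀ n : ℕ,
      P {ω | noLad (fun m => S m ω) n} = P {ω | sMin (fun m => S m ω) n} := by
    intro n
    set ANL : Set (Fin n → ℝ) := {x | noLad (fun m => W n x m) n} with hANL_def
    have hANLm : MeasurableSet ANL :=
      measurableSet_noLad (g := fun m (x : Fin n → ℝ) => W n x m)
        (fun m => measurable_W n m) n
    have h1 : {ω | noLad (fun m => S m ω) n} = {ω | (fun i : Fin n => ξ ↑i ω) ∈ ANL} := by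
      ext ω
      simp only [Set.mem_setOf_eq, hANL_def]
      exact noLad_congr (fun j hj => by
        rw [W_apply _ (fun j' => ξ j' ω) (fun i => rfl) hj, ← hS j ω])
    have h2 : {ω | sMin (fun m => S m ω) n}
        = {ω | (fun i : Fin n => ξ (n - 1 - ↑i) ω) ∈ ANL} := by
      ext ω
      simp only [Set.mem_setOf_eq, hANL_def]
      have hcong : ∀ j ≤ n, (fun m => S n ω - S (n - m) ω) j
          = (fun m => W n (fun i : Fin n => ξ (n - 1 - ↑i) ω) m) j := by
        intro j hj
        show S n ω - S (n - j) ω = W n (fun i : Fin n => ξ (n - 1 - ↑i) ω) j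
        rw [W_apply _ (fun j' => ξ (n - 1 - j') ω) (fun i => rfl) hj, sum_rev n j ω hj]
      constructor
      · intro hsm
        exact (noLad_congr hcong).mp ((noLad_rev_iff (fun m => S m ω) n).mpr hsm)
      · intro hnl
        exact (noLad_rev_iff (fun m => S m ω) n).mp ((noLad_congr hcong).mpr hnl)
    rw [h1, h2,
      prob_pred P ξ hmeas hindep μ hlaw (fun i : Fin n => (↑i : ℕ))
        (fun i j h => Fin.ext h) hANLm,
      prob_pred P ξ hmeas hindep μ hlaw (fun i : Fin n => n - 1 - (↑i : ℕ))
        (fun i j h => Fin.ext (by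
          simp only at h
          have hi := i.isLt
          have hj := j.isLt
          omega)) hANLm]
  -- shifted sMin events have the same probability
  have hρ_shift : ∀ l k : ℕ,
      P {ω | sMin (fun j => S (k + j) ω - S k ω) l} = P {ω | sMin (fun m => S m ω) l} := by
    intro l k
    set Aρ : Set (Fin l → ℝ) := {x | sMin (fun m => W l x m) l} with hAρ_def
    have hAρm : MeasurableSet Aρ :=
      measurableSet_sMin (g := fun m (x : Fin l → ℝ) => W l x m) (fun m => measurable_W l m) l
    have e1 : {ω | sMin (fun j => S (k + j) ω - S k ω) l}
        = {ω | (fun i : Fin l => ξ (k + ↑i) ω) ∈ Aρ} := by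
      ext ω
      simp only [Set.mem_setOf_eq, hAρ_def]
      exact sMin_congr (fun j hj => by
        show S (k + j) ω - S k ω = W l (fun i : Fin l => ξ (k + ↑i) ω) j
        rw [W_apply _ (fun j' => ξ (k + j') ω) (fun i => rfl) hj, sum_shift k j ω])
    have e2 : {ω | sMin (fun m => S m ω) l} = {ω | (fun i : Fin l => ξ ↑i ω) ∈ Aρ} := by
      ext ω
      simp only [Set.mem_setOf_eq, hAρ_def]
      exact sMin_congr (fun j hj => by
        rw [W_apply _ (fun j' => ξ j' ω) (fun i => rfl) hj, ← hS j ω])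
    rw [e1, e2,
      prob_pred P ξ hmeas hindep μ hlaw (fun i : Fin l => k + (↑i : ℕ))
        (fun i j h => Fin.ext (by simp only at h; omega)) hAρm,
      prob_pred P ξ hmeas hindep μ hlaw (fun i : Fin l => (↑i : ℕ))
        (fun i j h => Fin.ext h) hAρm]
  -- first strict descending epoch has same law as T (symmetry + no ties)
  have hFD : ∀ k : ℕ, 1 ≤ k →
      P {ω | firstSD (fun m => S m ω) k} = P (T ⁻¹' {k}) := by
    intro k hk
    set AFD : Set (Fin k → ℝ) := {x | firstSD (fun m => W k x m) k} with hAFD_def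
    have hAFDm : MeasurableSet AFD :=
      measurableSet_firstSD (g := fun m (x : Fin k → ℝ) => W k x m)
        (fun m => measurable_W k m) k
    have e1 : {ω | firstSD (fun m => S m ω) k} = {ω | (fun i : Fin k => ξ ↑i ω) ∈ AFD} := by
      ext ω
      simp only [Set.mem_setOf_eq, hAFD_def]
      exact firstSD_congr (fun j hj => by
        rw [W_apply _ (fun j' => ξ j' ω) (fun i => rfl) hj, ← hS j ω])
    have h1 : P {ω | firstSD (fun m => S m ω) k} = Measure.pi (fun _ : Fin k => μ) AFD := by
      rw [e1]
      exact prob_pred P ξ hmeas hindep μ hlaw (fun i : Fin k => (↑i : ℕ))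
        (fun i j h => Fin.ext h) hAFDm
    have e2 : {ω | (fun i : Fin k => -(ξ ↑i ω)) ∈ AFD}
        = {ω | firstSA (fun m => S m ω) k} := by
      ext ω
      simp only [Set.mem_setOf_eq, hAFD_def]
      have hcong : firstSD (fun m => W k (fun i : Fin k => -(ξ ↑i ω)) m) k
          ↔ firstSD (fun m => -(S m ω)) k := by
        refine firstSD_congr fun j hj => ?_
        show W k (fun i : Fin k => -(ξ ↑i ω)) j = -(S j ω)
        rw [W_apply _ (fun j' => -(ξ j' ω)) (fun i => rfl) hj, Finset.sum_neg_distrib,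
          ← hS j ω]
      rw [hcong]
      exact firstSD_neg (fun m => S m ω) k
    have h2 : P {ω | firstSA (fun m => S m ω) k} = Measure.pi (fun _ : Fin k => μ) AFD := by
      rw [← e2]
      exact prob_pred P (fun i ω => -(ξ i ω)) hmeasn hindepn μ hlawn
        (fun i : Fin k => (↑i : ℕ)) (fun i j h => Fin.ext h) hAFDm
    have htnull : P (⋃ (p : ℕ × ℕ), ⋃ (_ : p.1 < p.2 ∧ p.2 ≤ k),
        {ω | S p.1 ω = S p.2 ω}) = 0 := by
      refine measure_iUnion_null fun p => measure_iUnion_null fun hp => ?_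
      have e3 : {ω | S p.1 ω = S p.2 ω} = {ω | ∑ i ∈ Finset.Ico p.1 p.2, ξ i ω = 0} := by
        ext ω
        simp only [Set.mem_setOf_eq]
        rw [Finset.sum_Ico_eq_sub _ hp.1.le, ← hS p.2 ω, ← hS p.1 ω]
        constructor <;> intro h <;> linarith
      rw [e3]
      exact null_sum P ξ hmeas hindep hident hatomless p.1 p.2 hp.1 0
    have h3 : P {ω | firstSA (fun m => S m ω) k} = P {ω | firstLad (fun m => S m ω) k} := by
      refine measure_eq_of_eq_off_null P htnull fun ω hω => ?_
      have hne : ∀ a b, a < b → b ≤ k → S a ω ≠ S b ω := by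
        intro a b hab hbk heq
        exact hω (Set.mem_iUnion.mpr ⟨(a, b), Set.mem_iUnion.mpr ⟨⟨hab, hbk⟩, heq⟩⟩)
      simp only [Set.mem_setOf_eq]
      exact (firstLad_iff_firstSA (f := fun m => S m ω) hne).symm
    rw [hTk k hk, h1, ← h2, h3]
  -- renewal identity
  have hren_meas : ∀ n : ℕ, 1 ≤ n → P {ω | sMin (fun m => S m ω) n}
      = ∑ k ∈ Finset.Icc 1 n, P (T ⁻¹' {k}) * P {ω | sMin (fun m => S m ω) (n - k)} := by
    intro n hn
    set E : ℕ → Set Ω := fun k =>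
      {ω | firstSD (fun m => S m ω) k} ∩
        {ω | sMin (fun j => S (k + j) ω - S k ω) (n - k)} with hE_def
    have hdecomp : {ω | sMin (fun m => S m ω) n} = ⋃ k ∈ Finset.Icc 1 n, E k := by
      ext ω
      simp only [Set.mem_setOf_eq, Set.mem_iUnion, Finset.mem_Icc, hE_def,
        Set.mem_inter_iff, exists_prop]
      rw [sMin_decomp (fun m => S m ω) n hn]
    have hdisjE : (↑(Finset.Icc 1 n) : Set ℕ).PairwiseDisjoint E := by
      intro i hi j hj hij
      rw [Function.onFun, Set.disjoint_left]
      rintro ω ⟨hiA, -⟩ ⟨hjA, -⟩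
      simp only [Finset.coe_Icc, Set.mem_Icc] at hi hj
      exact hij (firstSD_unique hiA hjA hi.1 hj.1)
    have hEmeas : ∀ k ∈ Finset.Icc 1 n, MeasurableSet (E k) := by
      intro k _
      rw [hE_def]
      exact (measurableSet_firstSD hSmeas k).inter
        (measurableSet_sMin (g := fun j ω => S (k + j) ω - S k ω)
          (fun j => (hSmeas (k + j)).sub (hSmeas k)) (n - k))
    have hfact : ∀ k, 1 ≤ k → k ≤ n → P (E k)
        = P {ω | firstSD (fun m => S m ω) k}
          * P {ω | sMin (fun j => S (k + j) ω - S k ω) (n - k)} := by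
      intro k h1 h2
      set AFD : Set (Fin k → ℝ) := {x | firstSD (fun m => W k x m) k} with hAFD_def
      set Aρ : Set (Fin (n - k) → ℝ) := {x | sMin (fun m => W (n - k) x m) (n - k)}
        with hAρ_def
      have hAFDm : MeasurableSet AFD :=
        measurableSet_firstSD (g := fun m (x : Fin k → ℝ) => W k x m)
          (fun m => measurable_W k m) k
      have hAρm : MeasurableSet Aρ :=
        measurableSet_sMin (g := fun m (x : Fin (n - k) → ℝ) => W (n - k) x m)
          (fun m => measurable_W (n - k) m) (n - k)
      have eA : {ω | firstSD (fun m => S m ω) k}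
          = (fun ω (i : Fin k) => ξ ↑i ω) ⁻¹' AFD := by
        ext ω
        simp only [Set.mem_setOf_eq, Set.mem_preimage, hAFD_def]
        exact firstSD_congr (fun j hj => by
          rw [W_apply _ (fun j' => ξ j' ω) (fun i => rfl) hj, ← hS j ω])
      have eB : {ω | sMin (fun j => S (k + j) ω - S k ω) (n - k)}
          = (fun ω (i : Fin (n - k)) => ξ (k + ↑i) ω) ⁻¹' Aρ := by
        ext ω
        simp only [Set.mem_setOf_eq, Set.mem_preimage, hAρ_def]
        exact sMin_congr (fun j hj => by
          show S (k + j) ω - S k ω = W (n - k) (fun i : Fin (n - k) => ξ (k + ↑i) ω) j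
          rw [W_apply _ (fun j' => ξ (k + j') ω) (fun i => rfl) hj, sum_shift k j ω])
      have hIF : IndepFun (fun ω (i : Fin k) => ξ ↑i ω)
          (fun ω (i : Fin (n - k)) => ξ (k + ↑i) ω) P := by
        have hST : Disjoint (Finset.range k) (Finset.Ico k n) := by
          rw [Finset.disjoint_left]
          intro x hx hx'
          rw [Finset.mem_range] at hx
          rw [Finset.mem_Ico] at hx'
          omega
        have base := hindep.indepFun_finset (Finset.range k) (Finset.Ico k n) hST hmeas
        have hφm : Measurable (fun (v : (i : (Finset.range k : Finset ℕ)) → ℝ)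
            (i : Fin k) => v ⟨(i : ℕ), Finset.mem_range.mpr i.isLt⟩) :=
          measurable_pi_lambda _ fun i => measurable_pi_apply _
        have hψm : Measurable (fun (v : (i : (Finset.Ico k n : Finset ℕ)) → ℝ)
            (i : Fin (n - k)) => v ⟨k + (i : ℕ),
              Finset.mem_Ico.mpr ⟨Nat.le_add_right k i, by have := i.isLt; omega⟩⟩) :=
          measurable_pi_lambda _ fun i => measurable_pi_apply _
        exact base.comp hφm hψm
      have hinter := hIF.measure_inter_preimage_eq_mul AFD Aρ hAFDm hAρm
      rw [hE_def]
      simp only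
      rw [eA, eB]
      exact hinter
    rw [hdecomp, measure_biUnion_finset hdisjE hEmeas]
    refine Finset.sum_congr rfl fun k hk => ?_
    obtain ⟨h1, h2⟩ := Finset.mem_Icc.mp hk
    rw [hfact k h1 h2, hFD k h1, hρ_shift (n - k) k]
  -- real sequences
  set a : ℕ → ℝ := fun k => (P (T ⁻¹' {k})).toReal with ha_def
  set ρ : ℕ → ℝ := fun m => (P {ω | sMin (fun j => S j ω) m}).toReal with hρ_def
  have ha0 : ∀ k, 0 ≤ a k := fun k => ENNReal.toReal_nonneg
  have hρnn : ∀ m, 0 ≤ ρ m := fun m => ENNReal.toReal_nonneg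
  have hρ0 : ρ 0 = 1 := by
    have huniv : {ω : Ω | sMin (fun j => S j ω) 0} = Set.univ := by
      ext ω
      simp [sMin]
    rw [hρ_def]
    simp only [huniv, measure_univ, ENNReal.toReal_one]
  have hsum_fin : ∀ n : ℕ, (∑ k ∈ Finset.Icc 1 n, P (T ⁻¹' {k})) ≠ ⊤ := by
    intro n
    exact (ENNReal.sum_lt_top.mpr fun k _ => measure_lt_top P _).ne
  have hr : ∀ n : ℕ, ρ n = 1 - ∑ k ∈ Finset.Icc 1 n, a k := by
    intro n
    have h := hpart n
    rw [hdual n] at h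
    have ht := congrArg ENNReal.toReal h
    rw [ENNReal.toReal_add (measure_ne_top P _) (hsum_fin n),
      ENNReal.toReal_sum (fun k _ => measure_ne_top P _), ENNReal.toReal_one] at ht
    rw [hρ_def, ha_def]
    simp only
    linarith [ht]
  have hren : ∀ n : ℕ, 1 ≤ n → ρ n = ∑ k ∈ Finset.Icc 1 n, a k * ρ (n - k) := by
    intro n hn
    have h := hren_meas n hn
    have ht := congrArg ENNReal.toReal h
    rw [ENNReal.toReal_sum (fun k _ => (ENNReal.mul_lt_top (measure_lt_top P _)
      (measure_lt_top P _)).ne)] at ht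
    rw [hρ_def, ha_def]
    simp only
    rw [ht]
    exact Finset.sum_congr rfl fun k _ => ENNReal.toReal_mul
  -- the integral
  intro s hs0 hs1
  set g : ℕ → ℝ := fun k => if k = 0 then (0:ℝ) else s ^ k with hg_def
  have hgm : Measurable g := measurable_from_top
  haveI : IsProbabilityMeasure (Measure.map T P) :=
    Measure.isProbabilityMeasure_map hTmeas.aemeasurable
  have hint : Integrable g (Measure.map T P) := by
    refine (integrable_const (1:ℝ)).mono' hgm.aestronglyMeasurable (ae_of_all _ fun k => ?_)
    rw [hg_def]
    by_cases h : k = 0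
    · simp [h]
    · simp only [if_neg h]
      rw [Real.norm_eq_abs, abs_of_nonneg (pow_nonneg hs0 k)]
      exact pow_le_one₀ hs0 hs1.le
  have heq1 : ∫ ω, (if T ω = 0 then (0:ℝ) else s ^ T ω) ∂P
      = ∫ y, g y ∂(Measure.map T P) := by
    rw [integral_map hTmeas.aemeasurable hgm.aestronglyMeasurable]
  have heq2 : ∫ y, g y ∂(Measure.map T P) = ∑' k, g k * a k := by
    rw [integral_countable' hint]
    refine tsum_congr fun k => ?_
    rw [measureReal_def, Measure.map_apply hTmeas (measurableSet_singleton k), smul_eq_mul, ha_def]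
    ring
  rw [heq1, heq2]
  have hgg : ∀ k, g k * a k = (if k = 0 then (0:ℝ) else s ^ k) * a k := fun k => rfl
  rw [tsum_congr hgg]
  exact genfun_calc a ρ s hs0 hs1 ha0 hρ0 hρnn hr hren
end

section
/- Let n ≥ 1 and let (ξ₁, …, ξₙ) be a random vector of real random variables that is exchangeable and sign-invariant. Then P(S_k > 0 for all 1 ≤ k ≤ n) ≥ P(ξ₁ > 0) · g(n−1). -/
open Finset

namespace Persist

variable {n : ℕ}

abbrev Cfg (n : ℕ) := Equiv.Perm (Fin n) × (Fin n → Bool)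

noncomputable def valN (y : Fin n → ℝ) (c : Cfg n) (i : ℕ) : ℝ :=
  if h : i < n then (if c.2 ⟨i, h⟩ then y (c.1 ⟨i, h⟩) else - y (c.1 ⟨i, h⟩)) else 0

noncomputable def T (y : Fin n → ℝ) (c : Cfg n) (k : ℕ) : ℝ := ∑ i ∈ range k, valN y c i

/-- suffix starting at `b` has all partial sums nonnegative -/
def Vfrom (y : Fin n → ℝ) (b : ℕ) (c : Cfg n) : Prop :=
  ∀ j, b ≤ j → j ≤ n → T y c b ≤ T y c j

/-- rotation of the block `[b, b+K)` by offset `o` -/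
def rotFun (b K o i : ℕ) : ℕ := if b ≤ i ∧ i < b + K then b + ((i - b + o) % K) else i

lemma rotFun_lt {b K o i : ℕ} (hK : 0 < K) (hi : i < n) (hbK : b + K ≤ n) :
    rotFun b K o i < n := by
  unfold rotFun
  split
  · have := Nat.mod_lt (i - b + o) hK; omega
  · exact hi

lemma rotFun_low {b K o i : ℕ} (h : i < b) : rotFun b K o i = i := by
  unfold rotFun; split <;> omega

lemma rotFun_high {b K o i : ℕ} (h : b + K ≤ i) : rotFun b K o i = i := by
  unfold rotFun; split <;> omega

lemma rotFun_mem {b K o i : ℕ} (hK : 0 < K) (h1 : b ≤ i) (h2 : i < b + K) :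
    b ≤ rotFun b K o i ∧ rotFun b K o i < b + K := by
  unfold rotFun
  rw [if_pos ⟨h1, h2⟩]
  have := Nat.mod_lt (i - b + o) hK; omega

lemma rotFun_inv {b K o o' i : ℕ} (hK : 0 < K) (ho : o < K) (ho' : o' < K)
    (hoo : (o + o') % K = 0) : rotFun b K o' (rotFun b K o i) = i := by
  by_cases h : b ≤ i ∧ i < b + K
  · have hmod := Nat.mod_lt (i - b + o) hK
    have e1 : rotFun b K o i = b + ((i - b + o) % K) := by
      unfold rotFun; rw [if_pos h]
    have h1 : i - b < K := by omega
    have key : ((i - b + o) % K + o') % K = i - b := by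
      rw [Nat.mod_add_mod, Nat.add_assoc, Nat.add_mod, hoo, Nat.add_zero,
        Nat.mod_eq_of_lt h1, Nat.mod_eq_of_lt h1]
    rw [e1]
    unfold rotFun
    rw [if_pos ⟨by omega, by omega⟩, Nat.add_sub_cancel_left, key]
    omega
  · unfold rotFun
    rw [if_neg h, if_neg h]

lemma off_inv1 {K o : ℕ} (hK : 0 < K) (ho : o < K) : (o + (K - o) % K) % K = 0 := by
  rcases Nat.eq_zero_or_pos o with h | h
  · subst h; simp [Nat.mod_self]
  · have h2 : (K - o) % K = K - o := Nat.mod_eq_of_lt (by omega)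
    rw [h2, show o + (K - o) = K from by omega, Nat.mod_self]

lemma off_inv2 {K o : ℕ} (hK : 0 < K) (ho : o < K) : ((K - o) % K + o) % K = 0 := by
  rw [Nat.add_comm]; exact off_inv1 hK ho

def rotPerm (n b K o : ℕ) (hK : 0 < K) (hbK : b + K ≤ n) (ho : o < K) : Equiv.Perm (Fin n) where
  toFun i := ⟨rotFun b K o i.1, rotFun_lt hK i.2 hbK⟩
  invFun i := ⟨rotFun b K ((K - o) % K) i.1, rotFun_lt hK i.2 hbK⟩
  left_inv i := Fin.ext (rotFun_inv hK ho (Nat.mod_lt _ hK) (off_inv1 hK ho))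
  right_inv i := Fin.ext (rotFun_inv hK (Nat.mod_lt _ hK) ho (off_inv2 hK ho))

lemma rotPerm_apply {b K o : ℕ} (hK : 0 < K) (hbK : b + K ≤ n) (ho : o < K) (i : Fin n) :
    ((rotPerm n b K o hK hbK ho) i : ℕ) = rotFun b K o i.1 := rfl

def rotCfg (ρ : Equiv.Perm (Fin n)) (c : Cfg n) : Cfg n := (ρ.trans c.1, c.2 ∘ ρ)

lemma valN_rot (y : Fin n → ℝ) (c : Cfg n) {b K o : ℕ} (hK : 0 < K) (hbK : b + K ≤ n)
    (ho : o < K) (i : ℕ) :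
    valN y (rotCfg (rotPerm n b K o hK hbK ho) c) i = valN y c (rotFun b K o i) := by
  by_cases h : i < n
  · have h2 : rotFun b K o i < n := rotFun_lt hK h hbK
    unfold valN rotCfg
    rw [dif_pos h, dif_pos h2]
    have : (⟨rotFun b K o i, h2⟩ : Fin n) = (rotPerm n b K o hK hbK ho) ⟨i, h⟩ := rfl
    rw [this]; rfl
  · have h2 : ¬ rotFun b K o i < n := by
      rw [rotFun_high (by omega)]; exact h
    unfold valN; rw [dif_neg h, dif_neg h2]

lemma Tdiff (y : Fin n → ℝ) (c : Cfg n) (a u : ℕ) :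
    (∑ s ∈ range u, valN y c (a + s)) = T y c (a + u) - T y c a := by
  have h1 : T y c (a + u) = T y c a + ∑ i ∈ Ico a (a + u), valN y c i := by
    simp only [T, range_eq_Ico]
    exact (Finset.sum_Ico_consecutive (valN y c) (Nat.zero_le a) (Nat.le_add_right a u)).symm
  have h2 : ∑ i ∈ Ico a (a + u), valN y c i = ∑ s ∈ range u, valN y c (a + s) := by
    rw [Finset.sum_Ico_eq_sum_range, Nat.add_sub_cancel_left]
  rw [h1, h2]; ring

lemma T_split (y : Fin n → ℝ) (c : Cfg n) (a u : ℕ) :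
    T y c (a + u) = T y c a + ∑ s ∈ range u, valN y c (a + s) := by
  rw [Tdiff]; ring

/-- T of rotated configuration at low cut points -/
lemma T_rot_low (y : Fin n → ℝ) (c : Cfg n) {b K o : ℕ} (hK : 0 < K) (hbK : b + K ≤ n)
    (ho : o < K) {k : ℕ} (hk : k ≤ b) :
    T y (rotCfg (rotPerm n b K o hK hbK ho) c) k = T y c k := by
  unfold T
  refine Finset.sum_congr rfl (fun i hi => ?_)
  rw [valN_rot, rotFun_low (by simp at hi; omega)]

/-- T of rotated configuration at high cut points -/
lemma T_rot_high (y : Fin n → ℝ) (c : Cfg n) {b K o : ℕ} (hK : 0 < K) (hbK : b + K ≤ n)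
    (ho : o < K) {k : ℕ} (hk : b + K ≤ k) :
    T y (rotCfg (rotPerm n b K o hK hbK ho) c) k = T y c k := by
  unfold T
  rw [Finset.sum_congr rfl (fun i _ => valN_rot y c hK hbK ho i)]
  refine Finset.sum_nbij' (fun i => rotFun b K o i) (fun i => rotFun b K ((K - o) % K) i)
    ?_ ?_ ?_ ?_ ?_
  · intro a ha
    simp only [Finset.mem_range] at *
    by_cases h : b ≤ a ∧ a < b + K
    · have := rotFun_mem (o := o) hK h.1 h.2; omega
    · rcases not_and_or.mp h with h' | h'
      · rw [rotFun_low (by omega)]; omega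
      · rw [rotFun_high (by omega)]; omega
  · intro a ha
    simp only [Finset.mem_range] at *
    by_cases h : b ≤ a ∧ a < b + K
    · have := rotFun_mem (o := (K - o) % K) hK h.1 h.2; omega
    · rcases not_and_or.mp h with h' | h'
      · rw [rotFun_low (by omega)]; omega
      · rw [rotFun_high (by omega)]; omega
  · intro a _
    exact rotFun_inv hK ho (Nat.mod_lt _ hK) (off_inv1 hK ho)
  · intro a _
    exact rotFun_inv hK (Nat.mod_lt _ hK) ho (off_inv2 hK ho)
  · intro a _; rfl

/-- block formula, no wrap -/
lemma T_rot_block1 (y : Fin n → ℝ) (c : Cfg n) {b K o : ℕ} (hK : 0 < K) (hbK : b + K ≤ n)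
    (ho : o < K) {t : ℕ} (ht : t ≤ K - o) :
    T y (rotCfg (rotPerm n b K o hK hbK ho) c) (b + t)
      = T y c b + (T y c (b + o + t) - T y c (b + o)) := by
  set c' := rotCfg (rotPerm n b K o hK hbK ho) c with hc'
  rw [T_split y c' b t, T_rot_low y c hK hbK ho (le_refl b)]
  congr 1
  have key : ∀ s ∈ range t, valN y c' (b + s) = valN y c (b + o + s) := by
    intro s hs
    simp only [Finset.mem_range] at hs
    rw [valN_rot y c hK hbK ho]
    unfold rotFun
    rw [if_pos ⟨by omega, by omega⟩, Nat.add_sub_cancel_left,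
      Nat.mod_eq_of_lt (by omega)]
    congr 1; omega
  rw [Finset.sum_congr rfl key, Tdiff]

/-- block formula with wrap -/
lemma T_rot_block2 (y : Fin n → ℝ) (c : Cfg n) {b K o : ℕ} (hK : 0 < K) (hbK : b + K ≤ n)
    (ho : o < K) {t : ℕ} (ht1 : K - o ≤ t) (ht2 : t ≤ K) :
    T y (rotCfg (rotPerm n b K o hK hbK ho) c) (b + t)
      = T y c (b + K) - T y c (b + o) + T y c (b + (t - (K - o))) := by
  set c' := rotCfg (rotPerm n b K o hK hbK ho) c with hc'
  rw [T_split y c' b t, T_rot_low y c hK hbK ho (le_refl b)]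
  have hsplit : ∑ s ∈ range t, valN y c' (b + s)
      = (∑ s ∈ range (K - o), valN y c' (b + s)) + ∑ s ∈ Ico (K - o) t, valN y c' (b + s) := by
    simp only [range_eq_Ico]
    exact (Finset.sum_Ico_consecutive (fun s => valN y c' (b + s)) (Nat.zero_le (K - o)) ht1).symm
  have h1 : (∑ s ∈ range (K - o), valN y c' (b + s)) = T y c (b + K) - T y c (b + o) := by
    have key : ∀ s ∈ range (K - o), valN y c' (b + s) = valN y c (b + o + s) := by
      intro s hs
      simp only [Finset.mem_range] at hs
      rw [valN_rot y c hK hbK ho]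
      unfold rotFun
      rw [if_pos ⟨by omega, by omega⟩, Nat.add_sub_cancel_left,
        Nat.mod_eq_of_lt (by omega)]
      congr 1; omega
    rw [Finset.sum_congr rfl key, Tdiff]
    congr 2; omega
  have h2 : (∑ s ∈ Ico (K - o) t, valN y c' (b + s)) = T y c (b + (t - (K - o))) - T y c b := by
    rw [Finset.sum_Ico_eq_sum_range]
    have key : ∀ s ∈ range (t - (K - o)), valN y c' (b + (K - o + s)) = valN y c (b + s) := by
      intro s hs
      simp only [Finset.mem_range] at hs
      rw [valN_rot y c hK hbK ho]
      unfold rotFun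
      rw [if_pos ⟨by omega, by omega⟩, Nat.add_sub_cancel_left]
      have e1 : K - o + s + o = s + K := by omega
      have e2 : (s + K) % K = s := by
        rw [Nat.add_mod_right, Nat.mod_eq_of_lt (by omega)]
      rw [e1, e2]
    rw [Finset.sum_congr rfl key, Tdiff]
  rw [hsplit, h1, h2]; ring

open scoped Classical

/-- first argmin of `T y c` on `[b, j)` -/
noncomputable def am (y : Fin n → ℝ) (c : Cfg n) (b j : ℕ) : ℕ :=
  if h : b < j then
    ((Ico b j).filter (fun i => ∀ i' ∈ Ico b j, T y c i ≤ T y c i')).min'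
      (by
        obtain ⟨x, hx, hx2⟩ := Finset.exists_min_image (Ico b j) (T y c)
          ⟨b, Finset.mem_Ico.mpr ⟨le_refl b, h⟩⟩
        exact ⟨x, Finset.mem_filter.mpr ⟨hx, hx2⟩⟩)
  else b

lemma am_spec (y : Fin n → ℝ) (c : Cfg n) {b j : ℕ} (h : b < j) :
    (b ≤ am y c b j ∧ am y c b j < j)
    ∧ (∀ i, b ≤ i → i < j → T y c (am y c b j) ≤ T y c i)
    ∧ (∀ i, b ≤ i → i < am y c b j → T y c (am y c b j) < T y c i) := by
  have hne : (((Ico b j).filter (fun i => ∀ i' ∈ Ico b j, T y c i ≤ T y c i'))).Nonempty := by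
    obtain ⟨x, hx, hx2⟩ := Finset.exists_min_image (Ico b j) (T y c)
      ⟨b, Finset.mem_Ico.mpr ⟨le_refl b, h⟩⟩
    exact ⟨x, Finset.mem_filter.mpr ⟨hx, hx2⟩⟩
  have hdef : am y c b j = (((Ico b j).filter (fun i => ∀ i' ∈ Ico b j, T y c i ≤ T y c i'))).min' hne := by
    unfold am; rw [dif_pos h]
  have hmem := Finset.min'_mem _ hne
  rw [← hdef] at hmem
  obtain ⟨hmem1, hmem2⟩ := Finset.mem_filter.mp hmem
  rw [Finset.mem_Ico] at hmem1
  refine ⟨hmem1, fun i h1 h2 => hmem2 i (Finset.mem_Ico.mpr ⟨h1, h2⟩), fun i h1 h2 => ?_⟩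
  -- first argmin: positions before it are strictly above
  by_contra hcon
  push_neg at hcon
  have hile : T y c i ≤ T y c (am y c b j) := hcon
  have himem : i ∈ (Ico b j).filter (fun i => ∀ i' ∈ Ico b j, T y c i ≤ T y c i') := by
    refine Finset.mem_filter.mpr ⟨Finset.mem_Ico.mpr ⟨h1, by omega⟩, fun i' hi' => ?_⟩
    exact le_trans hile (hmem2 i' hi')
  have := Finset.min'_le _ i himem
  rw [← hdef] at this
  omega

/-- the forward rotation: specification of all needed properties -/
lemma rot_spec (y : Fin n → ℝ) (c : Cfg n) {b j : ℕ} (hb1 : 1 ≤ b) (hbj : b < j) (hjn : j ≤ n)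
    (hsum : T y c b ≤ T y c j) (hV : Vfrom y j c)
    (hK : 0 < j - b) (hbK : b + (j - b) ≤ n) (ho : am y c b j - b < j - b) :
    Vfrom y b (rotCfg (rotPerm n b (j - b) (am y c b j - b) hK hbK ho) c)
    ∧ (∀ k, j ≤ k → k ≤ n → T y (rotCfg (rotPerm n b (j - b) (am y c b j - b) hK hbK ho) c) k = T y c k)
    ∧ (∀ i, j - (am y c b j - b) ≤ i → i < j →
        T y (rotCfg (rotPerm n b (j - b) (am y c b j - b) hK hbK ho) c) j
          < T y (rotCfg (rotPerm n b (j - b) (am y c b j - b) hK hbK ho) c) i)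
    ∧ (∀ (i : Fin n), i.1 < b →
        (rotCfg (rotPerm n b (j - b) (am y c b j - b) hK hbK ho) c).1 i = c.1 i
        ∧ (rotCfg (rotPerm n b (j - b) (am y c b j - b) hK hbK ho) c).2 i = c.2 i) := by
  obtain ⟨⟨hA1, hA2⟩, hAmin, hAfirst⟩ := am_spec y c hbj
  set K := j - b with hKdef
  set A := am y c b j with hAdef
  set o := A - b with hodef
  set ρ := rotPerm n b K o hK hbK ho with hρ
  set c' := rotCfg ρ c with hc'
  have hbo : b + o = A := by omega
  have hbK' : b + K = j := by omega
  -- high equality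
  have Thigh : ∀ k, j ≤ k → k ≤ n → T y c' k = T y c k := by
    intro k hk1 _
    exact T_rot_high y c hK hbK ho (by omega)
  have Tlow : T y c' b = T y c b := T_rot_low y c hK hbK ho (le_refl b)
  -- values inside the block
  have Tblk : ∀ t, b + t < j → T y c' (b + t) ≥ T y c b := by
    intro t ht
    by_cases hcase : t ≤ K - o
    · rw [T_rot_block1 y c hK hbK ho hcase]
      have : T y c (b + o + t) ≥ T y c (b + o) := by
        rw [hbo]
        rcases Nat.lt_or_ge (A + t) j with h | h
        · exact hAmin (A + t) (by omega) h
        · have : A + t = j := by omega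
          rw [this]
          exact le_trans (hAmin b (le_refl b) hbj) hsum
      linarith
    · push_neg at hcase
      rw [T_rot_block2 y c hK hbK ho (le_of_lt hcase) (by omega), hbK', hbo]
      have h1 : T y c (b + (t - (K - o))) ≥ T y c A := hAmin _ (by omega) (by omega)
      linarith
  refine ⟨?_, Thigh, ?_, ?_⟩
  · -- Vfrom b
    intro k hk1 hk2
    rw [Tlow]
    rcases Nat.lt_or_ge k j with h | h
    · rcases Nat.eq_or_lt_of_le hk1 with h' | h'
      · rw [← h', Tlow]
      · have : k = b + (k - b) := by omega
        rw [this]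
        exact Tblk (k - b) (by omega)
    · rw [Thigh k h hk2]
      exact le_trans hsum (hV k h hk2)
  · -- strict part
    intro i hi1 hi2
    have hTj : T y c' j = T y c j := Thigh j (le_refl j) hjn
    have hi3 : b ≤ i := by omega
    set t := i - b with htdef
    have hit : i = b + t := by omega
    have hoA : A - b = o := by omega
    rw [hoA] at hi1
    have hwrap : K - o ≤ t := by omega
    have hopos : 1 ≤ o := by omega
    rw [hit, T_rot_block2 y c hK hbK ho hwrap (by omega), hbK', hbo, hTj]
    have : T y c (b + (t - (K - o))) > T y c A := by
      apply hAfirst _ (by omega) (by omega)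
    linarith
  · -- fixes low positions
    intro i hi
    have h1 : ρ i = i := by
      apply Fin.ext
      rw [hρ, rotPerm_apply, rotFun_low hi]
    constructor
    · show c.1 (ρ i) = c.1 i
      rw [h1]
    · show c.2 (ρ i) = c.2 i
      rw [h1]

/-- anchored at coordinate a : the permutation sends position 0 to a -/
def anch (a : Fin n) (c : Cfg n) : Prop := ∀ (h : 0 < n), c.1 ⟨0, h⟩ = a

noncomputable def DD (y : Fin n → ℝ) (a : Fin n) (b : ℕ) : ℕ :=
  ((univ : Finset (Cfg n)).filter (fun c => anch a c ∧ Vfrom y b c)).card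

noncomputable def II (y : Fin n → ℝ) (a : Fin n) (b j : ℕ) : ℕ :=
  ((univ : Finset (Cfg n)).filter
    (fun c => anch a c ∧ (T y c b ≤ T y c j ∧ Vfrom y j c))).card

lemma rotCfg_injective (ρ : Equiv.Perm (Fin n)) :
    Function.Injective (fun c : Cfg n => rotCfg ρ c) := by
  intro c₁ c₂ h
  obtain ⟨h1, h2⟩ := Prod.ext_iff.mp h
  have e1 : c₁.1 = c₂.1 := by
    apply Equiv.ext
    intro x
    have := congrArg (fun e : Equiv.Perm (Fin n) => e (ρ.symm x)) h1
    simpa [rotCfg, Equiv.apply_symm_apply] using this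
  have e2 : c₁.2 = c₂.2 := by
    funext x
    have := congrFun h2 (ρ.symm x)
    simpa [rotCfg, Equiv.apply_symm_apply] using this
  exact Prod.ext e1 e2

noncomputable def theta (y : Fin n → ℝ) (b : ℕ) (p : (_ : ℕ) × Cfg n) : Cfg n × ℕ :=
  if h : 1 ≤ b ∧ b < p.1 ∧ p.1 ≤ n then
    (rotCfg (rotPerm n b (p.1 - b) (am y p.2 b p.1 - b) (by omega) (by omega)
        (by have := (am_spec y p.2 h.2.1).1; omega)) p.2,
     p.1 - (am y p.2 b p.1 - b))
  else (p.2, 0)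

theorem A1 (y : Fin n → ℝ) (a : Fin n) (b : ℕ) (hb1 : 1 ≤ b) (hbn : b ≤ n) :
    ∑ j ∈ Ioc b n, II y a b j ≤ (n - b) * DD y a b := by
  have hsig : ∑ j ∈ Ioc b n, II y a b j
      = ((Ioc b n).sigma (fun j => (univ : Finset (Cfg n)).filter
          (fun c => anch a c ∧ (T y c b ≤ T y c j ∧ Vfrom y j c)))).card := by
    rw [Finset.card_sigma]
    rfl
  have htar : (n - b) * DD y a b
      = ((Ioc b n) ×ˢ ((univ : Finset (Cfg n)).filter
          (fun c => anch a c ∧ Vfrom y b c))).card := by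
    rw [Finset.card_product, Nat.card_Ioc]
    rfl
  rw [hsig, htar]
  apply Finset.card_le_card_of_injOn (fun p => ((theta y b p).2, (theta y b p).1))
  · -- maps to
    rintro ⟨j, c⟩ hp
    obtain ⟨hj, hc⟩ := Finset.mem_sigma.mp hp
    dsimp only at hj hc ⊢
    obtain ⟨hbj, hjn⟩ := Finset.mem_Ioc.mp hj
    obtain ⟨-, hanch, hsum, hV⟩ := Finset.mem_filter.mp hc
    have hcond : 1 ≤ b ∧ b < j ∧ j ≤ n := ⟨hb1, hbj, hjn⟩
    obtain ⟨⟨hA1, hA2⟩, -, -⟩ := am_spec y c hbj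
    have htheta : theta y b ⟨j, c⟩
        = (rotCfg (rotPerm n b (j - b) (am y c b j - b) (by omega) (by omega) (by omega)) c,
           j - (am y c b j - b)) := by
      unfold theta
      rw [dif_pos hcond]
    obtain ⟨hVb, hThigh, hstrict, hfix⟩ :=
      rot_spec y c hb1 hbj hjn hsum hV (by omega) (by omega) (by omega)
    rw [Finset.mem_coe, Finset.mem_product]
    constructor
    · rw [htheta]
      exact Finset.mem_Ioc.mpr ⟨by omega, by omega⟩
    · rw [htheta]
      refine Finset.mem_filter.mpr ⟨Finset.mem_univ _, ?_, hVb⟩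
      intro h0
      rw [(hfix ⟨0, h0⟩ hb1).1]
      exact hanch h0
  · -- injective
    rintro ⟨j₁, c₁⟩ hp₁ ⟨j₂, c₂⟩ hp₂ heq
    simp only [Finset.mem_coe] at hp₁ hp₂
    obtain ⟨hj₁, hc₁⟩ := Finset.mem_sigma.mp hp₁
    obtain ⟨hj₂, hc₂⟩ := Finset.mem_sigma.mp hp₂
    dsimp only at hj₁ hc₁ hj₂ hc₂ heq
    obtain ⟨hbj₁, hjn₁⟩ := Finset.mem_Ioc.mp hj₁
    obtain ⟨hbj₂, hjn₂⟩ := Finset.mem_Ioc.mp hj₂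
    obtain ⟨-, hanch₁, hsum₁, hV₁⟩ := Finset.mem_filter.mp hc₁
    obtain ⟨-, hanch₂, hsum₂, hV₂⟩ := Finset.mem_filter.mp hc₂
    obtain ⟨⟨hA11, hA12⟩, -, -⟩ := am_spec y c₁ hbj₁
    obtain ⟨⟨hA21, hA22⟩, -, -⟩ := am_spec y c₂ hbj₂
    have htheta₁ : theta y b ⟨j₁, c₁⟩
        = (rotCfg (rotPerm n b (j₁ - b) (am y c₁ b j₁ - b) (by omega) (by omega) (by omega)) c₁,
           j₁ - (am y c₁ b j₁ - b)) := by
      unfold theta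
      rw [dif_pos (⟨hb1, hbj₁, hjn₁⟩ : 1 ≤ b ∧ b < j₁ ∧ j₁ ≤ n)]
    have htheta₂ : theta y b ⟨j₂, c₂⟩
        = (rotCfg (rotPerm n b (j₂ - b) (am y c₂ b j₂ - b) (by omega) (by omega) (by omega)) c₂,
           j₂ - (am y c₂ b j₂ - b)) := by
      unfold theta
      rw [dif_pos (⟨hb1, hbj₂, hjn₂⟩ : 1 ≤ b ∧ b < j₂ ∧ j₂ ≤ n)]
    obtain ⟨hVb₁, hThigh₁, hstrict₁, hfix₁⟩ :=
      rot_spec y c₁ hb1 hbj₁ hjn₁ hsum₁ hV₁ (by omega) (by omega) (by omega)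
    obtain ⟨hVb₂, hThigh₂, hstrict₂, hfix₂⟩ :=
      rot_spec y c₂ hb1 hbj₂ hjn₂ hsum₂ hV₂ (by omega) (by omega) (by omega)
    rw [htheta₁, htheta₂] at heq
    obtain ⟨hpp, hcc⟩ := Prod.ext_iff.mp heq
    simp only at hpp hcc
    -- first show j₁ = j₂
    have hjj : j₁ = j₂ := by
      by_contra hne
      rcases Nat.lt_or_ge j₁ j₂ with hlt | hge
      · -- T c' j₁ ≤ T c' j₂ from suffix validity of input 1, contradiction with strict of 2
        have e1 : T y (rotCfg (rotPerm n b (j₁ - b) (am y c₁ b j₁ - b)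
            (by omega) (by omega) (by omega)) c₁) j₁ = T y c₁ j₁ := hThigh₁ j₁ (le_refl _) hjn₁
        have e2 : T y (rotCfg (rotPerm n b (j₁ - b) (am y c₁ b j₁ - b)
            (by omega) (by omega) (by omega)) c₁) j₂ = T y c₁ j₂ :=
          hThigh₁ j₂ (by omega) hjn₂
        have hle : T y c₁ j₁ ≤ T y c₁ j₂ := hV₁ j₂ (by omega) hjn₂
        have hst := hstrict₂ j₁ (by omega) hlt
        rw [← hcc] at hst
        rw [e1, e2] at hst
        -- hst : T y c₁ j₂ < T y c₁ j₁  (after rewriting), contradiction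
        linarith
      · have hlt : j₂ < j₁ := by omega
        have e1 : T y (rotCfg (rotPerm n b (j₂ - b) (am y c₂ b j₂ - b)
            (by omega) (by omega) (by omega)) c₂) j₂ = T y c₂ j₂ := hThigh₂ j₂ (le_refl _) hjn₂
        have e2 : T y (rotCfg (rotPerm n b (j₂ - b) (am y c₂ b j₂ - b)
            (by omega) (by omega) (by omega)) c₂) j₁ = T y c₂ j₁ :=
          hThigh₂ j₁ (by omega) hjn₁
        have hle : T y c₂ j₂ ≤ T y c₂ j₁ := hV₂ j₁ (by omega) hjn₁
        have hst := hstrict₁ j₂ (by omega) hlt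
        rw [hcc] at hst
        rw [e1, e2] at hst
        linarith
    subst hjj
    -- now offsets are equal
    have hoo : am y c₁ b j₁ - b = am y c₂ b j₁ - b := by omega
    -- hence the rotation permutations coincide
    have hρ : rotPerm n b (j₁ - b) (am y c₁ b j₁ - b) (by omega) (by omega) (by omega)
        = rotPerm n b (j₁ - b) (am y c₂ b j₁ - b) (by omega) (by omega) (by omega) := by
      apply Equiv.ext
      intro x
      apply Fin.ext
      rw [rotPerm_apply, rotPerm_apply, hoo]
    rw [hρ] at hcc
    have := rotCfg_injective _ hcc
    rw [this]

/-- flip the signs on block `[b, j)` -/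
def flipCfg (b j : ℕ) (c : Cfg n) : Cfg n :=
  (c.1, fun i => if b ≤ i.1 ∧ i.1 < j then !(c.2 i) else c.2 i)

lemma valN_flip_in (y : Fin n → ℝ) (b j : ℕ) (c : Cfg n) {i : ℕ} (h1 : b ≤ i) (h2 : i < j) :
    valN y (flipCfg b j c) i = - valN y c i := by
  unfold valN flipCfg
  by_cases h : i < n
  · rw [dif_pos h, dif_pos h]
    simp only
    rw [if_pos (⟨h1, h2⟩ : b ≤ (⟨i, h⟩ : Fin n).1 ∧ (⟨i, h⟩ : Fin n).1 < j)]
    cases hb : c.2 ⟨i, h⟩ <;> simp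
  · rw [dif_neg h, dif_neg h]; ring

lemma fin_mk_val {n : ℕ} (i : ℕ) (h : i < n) : ((⟨i, h⟩ : Fin n) : ℕ) = i := rfl

lemma valN_flip_out (y : Fin n → ℝ) (b j : ℕ) (c : Cfg n) {i : ℕ} (h : i < b ∨ j ≤ i) :
    valN y (flipCfg b j c) i = valN y c i := by
  unfold valN flipCfg
  by_cases hn' : i < n
  · rw [dif_pos hn', dif_pos hn']
    simp only
    rw [if_neg (show ¬(b ≤ ((⟨i, hn'⟩ : Fin n) : ℕ) ∧ ((⟨i, hn'⟩ : Fin n) : ℕ) < j) from by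
      rw [fin_mk_val]; omega)]
  · rw [dif_neg hn', dif_neg hn']

lemma flip_T_low (y : Fin n → ℝ) (b j : ℕ) (c : Cfg n) {k : ℕ} (hk : k ≤ b) :
    T y (flipCfg b j c) k = T y c k := by
  unfold T
  refine Finset.sum_congr rfl (fun i hi => ?_)
  simp only [Finset.mem_range] at hi
  exact valN_flip_out y b j c (Or.inl (by omega))

lemma flip_T_high (y : Fin n → ℝ) (b j : ℕ) (c : Cfg n) {k : ℕ} (hk : j ≤ k) :
    T y (flipCfg b j c) k - T y (flipCfg b j c) j = T y c k - T y c j := by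
  have h1 : T y (flipCfg b j c) k
      = T y (flipCfg b j c) j + ∑ s ∈ range (k - j), valN y (flipCfg b j c) (j + s) := by
    have h := T_split y (flipCfg b j c) j (k - j)
    rwa [show j + (k - j) = k from by omega] at h
  have h2 : T y c k = T y c j + ∑ s ∈ range (k - j), valN y c (j + s) := by
    have h := T_split y c j (k - j)
    rwa [show j + (k - j) = k from by omega] at h
  have h3 : ∀ s ∈ range (k - j), valN y (flipCfg b j c) (j + s) = valN y c (j + s) := by
    intro s _
    exact valN_flip_out y b j c (Or.inr (by omega))
  rw [h1, h2, Finset.sum_congr rfl h3]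
  ring

lemma flip_T_block (y : Fin n → ℝ) (b j : ℕ) (c : Cfg n) (hbj : b ≤ j) :
    T y (flipCfg b j c) j - T y (flipCfg b j c) b = -(T y c j - T y c b) := by
  have h1 : T y (flipCfg b j c) j
      = T y (flipCfg b j c) b + ∑ s ∈ range (j - b), valN y (flipCfg b j c) (b + s) := by
    have h := T_split y (flipCfg b j c) b (j - b)
    rwa [show b + (j - b) = j from by omega] at h
  have h2 : T y c j = T y c b + ∑ s ∈ range (j - b), valN y c (b + s) := by
    have h := T_split y c b (j - b)
    rwa [show b + (j - b) = j from by omega] at h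
  have h3 : ∀ s ∈ range (j - b), valN y (flipCfg b j c) (b + s) = - valN y c (b + s) := by
    intro s hs
    simp only [Finset.mem_range] at hs
    exact valN_flip_in y b j c (by omega) (by omega)
  rw [h1, h2, Finset.sum_congr rfl h3, Finset.sum_neg_distrib]
  ring

lemma flip_invol (b j : ℕ) (c : Cfg n) : flipCfg b j (flipCfg b j c) = c := by
  unfold flipCfg
  refine Prod.ext rfl ?_
  funext i
  simp only
  by_cases h : b ≤ i.1 ∧ i.1 < j
  · rw [if_pos h, if_pos h, Bool.not_not]
  · rw [if_neg h, if_neg h]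

lemma HALF (y : Fin n → ℝ) (a : Fin n) {b j : ℕ} (hbj : b ≤ j) (hjn : j ≤ n) :
    DD y a j ≤ 2 * II y a b j := by
  classical
  set A := (univ : Finset (Cfg n)).filter (fun c => anch a c ∧ Vfrom y j c) with hA
  have hDD : DD y a j = A.card := rfl
  set P : Cfg n → Prop := fun c => T y c b ≤ T y c j with hP
  have hsplit : (A.filter P).card + (A.filter (fun c => ¬ P c)).card = A.card :=
    Finset.card_filter_add_card_filter_not P
  have hII : II y a b j = (A.filter P).card := by
    unfold II
    rw [hA, Finset.filter_filter]
    congr 1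
    apply Finset.filter_congr
    intro c _
    constructor
    · rintro ⟨h1, h2, h3⟩; exact ⟨⟨h1, h3⟩, h2⟩
    · rintro ⟨⟨h1, h3⟩, h2⟩; exact ⟨h1, h2, h3⟩
  have hneg : (A.filter (fun c => ¬ P c)).card ≤ (A.filter P).card := by
    apply Finset.card_le_card_of_injOn (flipCfg b j)
    · intro c hc
      obtain ⟨hcA, hcP⟩ := Finset.mem_filter.mp hc
      obtain ⟨-, hanch, hV⟩ := Finset.mem_filter.mp hcA
      refine Finset.mem_filter.mpr ⟨Finset.mem_filter.mpr ⟨Finset.mem_univ _, ?_, ?_⟩, ?_⟩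
      · intro h0
        exact hanch h0
      · intro k hk1 hk2
        have := flip_T_high y b j c (hk := hk1)
        have h2 := hV k hk1 hk2
        linarith
      · show T y (flipCfg b j c) b ≤ T y (flipCfg b j c) j
        have := flip_T_block y b j c hbj
        simp only [hP] at hcP
        push_neg at hcP
        linarith
    · intro c₁ h₁ c₂ h₂ heq
      have := congrArg (flipCfg b j) heq
      rwa [flip_invol, flip_invol] at this
  omega

noncomputable def gr (j : ℕ) : ℝ := (Nat.centralBinom j : ℝ) / 4 ^ j

lemma gr_nonneg (j : ℕ) : 0 ≤ gr j := by
  unfold gr; positivity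

lemma gr_zero : gr 0 = 1 := by
  unfold gr; simp [Nat.centralBinom_zero]

lemma gr_succ_rel (L : ℕ) : (2 * (L : ℝ) + 1) * gr L = 2 * ((L : ℝ) + 1) * gr (L + 1) := by
  have h := congrArg (fun m : ℕ => (m : ℝ)) (Nat.succ_mul_centralBinom_succ L)
  push_cast at h
  unfold gr
  rw [pow_succ]
  have h4 : (0:ℝ) < 4 ^ L := by positivity
  field_simp
  nlinarith [h]

lemma grsum (L : ℕ) : ∑ i ∈ range L, gr i = 2 * L * gr L := by
  induction L with
  | zero => simp
  | succ L ih =>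
    rw [Finset.sum_range_succ, ih]
    have := gr_succ_rel L
    push_cast
    linarith

theorem DD_chain (y : Fin n → ℝ) (a : Fin n) :
    ∀ t b, 1 ≤ b → b ≤ n → n - b = t → gr t * (DD y a n : ℝ) ≤ (DD y a b : ℝ) := by
  intro t
  induction t using Nat.strong_induction_on with
  | _ t ih =>
    intro b hb1 hbn ht
    rcases Nat.eq_zero_or_pos t with h0 | hpos
    · subst h0
      have hb : b = n := by omega
      subst hb
      rw [gr_zero, one_mul]
    · have hbn' : b < n := by omega
      have key : ∑ j ∈ Ioc b n, gr (n - j) * (DD y a n : ℝ)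
          ≤ ∑ j ∈ Ioc b n, 2 * (II y a b j : ℝ) := by
        apply Finset.sum_le_sum
        intro j hj
        obtain ⟨hj1, hj2⟩ := Finset.mem_Ioc.mp hj
        have h3 : gr (n - j) * (DD y a n : ℝ) ≤ (DD y a j : ℝ) :=
          ih (n - j) (by omega) j (by omega) hj2 rfl
        have h1 : (DD y a j : ℝ) ≤ 2 * (II y a b j : ℝ) := by
          have := HALF y a (le_of_lt hj1) hj2
          push_cast
          exact_mod_cast this
        linarith
      have hre : ∑ j ∈ Ioc b n, gr (n - j) = ∑ i ∈ range (n - b), gr i := by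
        refine Finset.sum_nbij' (fun j => n - j) (fun i => n - i) ?_ ?_ ?_ ?_ ?_
        · intro j hj
          simp only [Finset.mem_Ioc] at hj
          simp only [Finset.mem_range]
          omega
        · intro i hi
          simp only [Finset.mem_range] at hi
          simp only [Finset.mem_Ioc]
          omega
        · intro j hj
          simp only [Finset.mem_Ioc] at hj
          show n - (n - j) = j
          omega
        · intro i hi
          simp only [Finset.mem_range] at hi
          show n - (n - i) = i
          omega
        · intro j _
          rfl
      have hLHS : ∑ j ∈ Ioc b n, gr (n - j) * (DD y a n : ℝ)
          = 2 * (n - b : ℕ) * gr (n - b) * (DD y a n : ℝ) := by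
        rw [← Finset.sum_mul, hre, grsum]
      have hRHS : ∑ j ∈ Ioc b n, 2 * (II y a b j : ℝ)
          ≤ 2 * (n - b : ℕ) * (DD y a b : ℝ) := by
        rw [← Finset.mul_sum]
        have h2 := A1 y a b hb1 hbn
        have h2' : ((∑ j ∈ Ioc b n, II y a b j : ℕ) : ℝ) ≤ ((n - b) * DD y a b : ℕ) := by
          exact_mod_cast h2
        push_cast at h2'
        push_cast
        nlinarith [h2']
      rw [hLHS] at key
      have hfin := le_trans key hRHS
      have hpos2 : (0:ℝ) < 2 * (n - b : ℕ) := by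
        have : 0 < n - b := by omega
        positivity
      have := (mul_le_mul_iff_right₀ hpos2).mp (by
        calc 2 * ((n-b:ℕ):ℝ) * (gr t * (DD y a n : ℝ))
            = 2 * ((n-b:ℕ):ℝ) * gr (n-b) * (DD y a n : ℝ) := by rw [← ht]; ring
          _ ≤ 2 * ((n-b:ℕ):ℝ) * (DD y a b : ℝ) := hfin)
      exact this

lemma flip0_fst (c : Cfg n) : (flipCfg 0 1 c).1 = c.1 := rfl

lemma valN0_ne (x : Fin n → ℝ) (hn : 0 < n) {a : Fin n} (hxa : x a ≠ 0) {c : Cfg n}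
    (hc : c.1 ⟨0, hn⟩ = a) : valN x c 0 ≠ 0 := by
  unfold valN
  rw [dif_pos hn]
  have : (⟨0, hn⟩ : Fin n) = ⟨0, hn⟩ := rfl
  cases hb : c.2 ⟨0, hn⟩ <;> simp [hb, hc, hxa]

/-- halving by the sign of the first step -/
lemma half0 (x : Fin n → ℝ) (hn : 0 < n) (a : Fin n) (hxa : x a ≠ 0) (Q : Cfg n → Prop)
    (hQ : ∀ c, Q (flipCfg 0 1 c) ↔ Q c) :
    ((univ : Finset (Cfg n)).filter (fun c => anch a c ∧ Q c)).card
      = 2 * ((univ : Finset (Cfg n)).filter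
          (fun c => (anch a c ∧ Q c) ∧ 0 < valN x c 0)).card := by
  classical
  set A := (univ : Finset (Cfg n)).filter (fun c => anch a c ∧ Q c) with hA
  set P : Cfg n → Prop := fun c => 0 < valN x c 0 with hP
  have hflipA : ∀ c ∈ A, flipCfg 0 1 c ∈ A := by
    intro c hc
    obtain ⟨-, hanch, hq⟩ := Finset.mem_filter.mp hc
    refine Finset.mem_filter.mpr ⟨Finset.mem_univ _, ?_, (hQ c).mpr hq⟩
    intro h0
    rw [flip0_fst]
    exact hanch h0
  have hval : ∀ c : Cfg n, valN x (flipCfg 0 1 c) 0 = - valN x c 0 :=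
    fun c => valN_flip_in x 0 1 c (le_refl 0) Nat.one_pos
  have hne : ∀ c ∈ A, valN x c 0 ≠ 0 := by
    intro c hc
    obtain ⟨-, hanch, -⟩ := Finset.mem_filter.mp hc
    exact valN0_ne x hn hxa (hanch hn)
  have hinj : ∀ (s : Finset (Cfg n)), Set.InjOn (flipCfg 0 1) (s : Set (Cfg n)) := by
    intro s c₁ h₁ c₂ h₂ heq
    have := congrArg (flipCfg 0 1) heq
    rwa [flip_invol, flip_invol] at this
  have hle1 : (A.filter (fun c => ¬ P c)).card ≤ (A.filter P).card := by
    apply Finset.card_le_card_of_injOn (flipCfg 0 1)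
    · intro c hc
      obtain ⟨hcA, hcP⟩ := Finset.mem_filter.mp hc
      refine Finset.mem_filter.mpr ⟨hflipA c hcA, ?_⟩
      have h1 := hval c
      have h2 := hne c hcA
      simp only [hP] at hcP ⊢
      push_neg at hcP
      rw [h1]
      rcases lt_trichotomy (valN x c 0) 0 with h | h | h
      · linarith
      · exact absurd h h2
      · linarith
    · exact hinj _
  have hle2 : (A.filter P).card ≤ (A.filter (fun c => ¬ P c)).card := by
    apply Finset.card_le_card_of_injOn (flipCfg 0 1)
    · intro c hc
      obtain ⟨hcA, hcP⟩ := Finset.mem_filter.mp hc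
      refine Finset.mem_filter.mpr ⟨hflipA c hcA, ?_⟩
      have h1 := hval c
      simp only [hP] at hcP ⊢
      rw [h1]
      push_neg
      linarith
    · exact hinj _
  have hsplit : (A.filter P).card + (A.filter (fun c => ¬ P c)).card = A.card :=
    Finset.card_filter_add_card_filter_not P
  have hAP : A.filter P
      = (univ : Finset (Cfg n)).filter (fun c => (anch a c ∧ Q c) ∧ 0 < valN x c 0) := by
    rw [hA, Finset.filter_filter]
  rw [← hAP]
  omega

lemma DD_top (x : Fin n → ℝ) (a : Fin n) :
    DD x a n = ((univ : Finset (Cfg n)).filter (fun c => anch a c)).card := by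
  unfold DD
  congr 1
  apply Finset.filter_congr
  intro c _
  constructor
  · rintro ⟨h1, -⟩; exact h1
  · intro h1
    refine ⟨h1, fun j hj1 hj2 => ?_⟩
    have : j = n := le_antisymm hj2 hj1
    rw [this]

lemma Vfrom1_flip0 (x : Fin n → ℝ) (c : Cfg n) :
    Vfrom x 1 (flipCfg 0 1 c) ↔ Vfrom x 1 c := by
  have key : ∀ k, 1 ≤ k →
      T x (flipCfg 0 1 c) k - T x (flipCfg 0 1 c) 1 = T x c k - T x c 1 :=
    fun k hk => flip_T_high x 0 1 c hk
  constructor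
  · intro hV k hk1 hk2
    have h1 := key k hk1
    have h2 := hV k hk1 hk2
    linarith
  · intro hV k hk1 hk2
    have h1 := key k hk1
    have h2 := hV k hk1 hk2
    linarith

lemma Vfrom_top (x : Fin n → ℝ) (c : Cfg n) : Vfrom x n c := by
  intro j hj1 hj2
  have : j = n := le_antisymm hj2 hj1
  rw [this]

noncomputable def NAf (x : Fin n → ℝ) : Finset (Cfg n) :=
  (univ : Finset (Cfg n)).filter (fun c => 0 < valN x c 0)

noncomputable def NBf (x : Fin n → ℝ) : Finset (Cfg n) :=
  (univ : Finset (Cfg n)).filter (fun c => ∀ k, 1 ≤ k → k ≤ n → 0 < T x c k)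

theorem star (x : Fin n → ℝ) (hn : 0 < n) :
    gr (n - 1) * ((NAf x).card : ℝ) ≤ ((NBf x).card : ℝ) := by
  classical
  -- the event with positive first step and nonnegative remainder is contained in B
  have hsub : (univ : Finset (Cfg n)).filter (fun c => 0 < valN x c 0 ∧ Vfrom x 1 c)
      ⊆ NBf x := by
    intro c hc
    obtain ⟨-, hpos, hV⟩ := Finset.mem_filter.mp hc
    simp only [NBf, Finset.mem_filter]
    refine ⟨Finset.mem_univ _, fun k hk1 hk2 => ?_⟩
    have h1 : T x c 1 = valN x c 0 := by
      unfold T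
      rw [Finset.sum_range_one]
    have h2 := hV k hk1 hk2
    linarith
  -- fiberwise decomposition by the first coordinate
  have hfibB : ((univ : Finset (Cfg n)).filter
        (fun c => 0 < valN x c 0 ∧ Vfrom x 1 c)).card
      = ∑ a ∈ (univ : Finset (Fin n)), ((univ : Finset (Cfg n)).filter
          (fun c => (0 < valN x c 0 ∧ Vfrom x 1 c) ∧ c.1 ⟨0, hn⟩ = a)).card := by
    rw [Finset.card_eq_sum_card_fiberwise
      (f := fun c : Cfg n => c.1 ⟨0, hn⟩) (t := univ) (fun c _ => Finset.mem_univ _)]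
    congr 1
    funext a
    rw [Finset.filter_filter]
  have hfibA : ((NAf x).card : ℕ)
      = ∑ a ∈ (univ : Finset (Fin n)), ((univ : Finset (Cfg n)).filter
          (fun c => (0 < valN x c 0) ∧ c.1 ⟨0, hn⟩ = a)).card := by
    unfold NAf
    rw [Finset.card_eq_sum_card_fiberwise
      (f := fun c : Cfg n => c.1 ⟨0, hn⟩) (t := univ) (fun c _ => Finset.mem_univ _)]
    congr 1
    funext a
    rw [Finset.filter_filter]
  -- per-fiber inequality
  have hper : ∀ a : Fin n,
      gr (n - 1) * (((univ : Finset (Cfg n)).filter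
          (fun c => (0 < valN x c 0) ∧ c.1 ⟨0, hn⟩ = a)).card : ℝ)
        ≤ (((univ : Finset (Cfg n)).filter
          (fun c => (0 < valN x c 0 ∧ Vfrom x 1 c) ∧ c.1 ⟨0, hn⟩ = a)).card : ℝ) := by
    intro a
    by_cases hxa : x a = 0
    · -- fiber of a zero coordinate is empty on the A side
      have : ((univ : Finset (Cfg n)).filter
          (fun c => (0 < valN x c 0) ∧ c.1 ⟨0, hn⟩ = a)) = ∅ := by
        apply Finset.filter_eq_empty_iff.mpr
        rintro c - ⟨hpos, hc0⟩
        revert hpos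
        unfold valN
        rw [dif_pos hn]
        cases hb : c.2 ⟨0, hn⟩ <;> simp [hb, hc0, hxa]
      rw [this]
      simp only [Finset.card_empty, Nat.cast_zero, mul_zero]
      positivity
    · -- use the halving lemmas and the induction chain
      have hB : ((univ : Finset (Cfg n)).filter
            (fun c => anch a c ∧ Vfrom x 1 c)).card
          = 2 * ((univ : Finset (Cfg n)).filter
            (fun c => (anch a c ∧ Vfrom x 1 c) ∧ 0 < valN x c 0)).card :=
        half0 x hn a hxa (Vfrom x 1) (Vfrom1_flip0 x)
      have hA : ((univ : Finset (Cfg n)).filter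
            (fun c => anch a c ∧ Vfrom x n c)).card
          = 2 * ((univ : Finset (Cfg n)).filter
            (fun c => (anch a c ∧ Vfrom x n c) ∧ 0 < valN x c 0)).card :=
        half0 x hn a hxa (Vfrom x n)
          (fun c => iff_of_true (Vfrom_top x _) (Vfrom_top x _))
      have hBeq : ((univ : Finset (Cfg n)).filter
            (fun c => (anch a c ∧ Vfrom x 1 c) ∧ 0 < valN x c 0))
          = ((univ : Finset (Cfg n)).filter
            (fun c => (0 < valN x c 0 ∧ Vfrom x 1 c) ∧ c.1 ⟨0, hn⟩ = a)) := by
        apply Finset.filter_congr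
        intro c _
        unfold anch
        constructor
        · rintro ⟨⟨h1, h2⟩, h3⟩; exact ⟨⟨h3, h2⟩, h1 hn⟩
        · rintro ⟨⟨h3, h2⟩, h1⟩; exact ⟨⟨fun _ => h1, h2⟩, h3⟩
      have hAeq : ((univ : Finset (Cfg n)).filter
            (fun c => (anch a c ∧ Vfrom x n c) ∧ 0 < valN x c 0))
          = ((univ : Finset (Cfg n)).filter
            (fun c => (0 < valN x c 0) ∧ c.1 ⟨0, hn⟩ = a)) := by
        apply Finset.filter_congr
        intro c _
        unfold anch
        constructor
        · rintro ⟨⟨h1, -⟩, h3⟩; exact ⟨h3, h1 hn⟩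
        · rintro ⟨h3, h1⟩; exact ⟨⟨fun _ => h1, Vfrom_top x _⟩, h3⟩
      have hDD1 : DD x a 1 = 2 * ((univ : Finset (Cfg n)).filter
            (fun c => (0 < valN x c 0 ∧ Vfrom x 1 c) ∧ c.1 ⟨0, hn⟩ = a)).card := by
        unfold DD
        rw [hB, hBeq]
      have hDDn : DD x a n = 2 * ((univ : Finset (Cfg n)).filter
            (fun c => (0 < valN x c 0) ∧ c.1 ⟨0, hn⟩ = a)).card := by
        unfold DD
        rw [hA, hAeq]
      have hchain := DD_chain x a (n - 1) 1 (le_refl 1) hn rfl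
      rw [hDD1, hDDn] at hchain
      push_cast at hchain
      linarith
  -- summation
  have hsum : gr (n - 1) * ((NAf x).card : ℝ)
      ≤ (((univ : Finset (Cfg n)).filter
        (fun c => 0 < valN x c 0 ∧ Vfrom x 1 c)).card : ℝ) := by
    rw [hfibA, hfibB]
    push_cast
    rw [Finset.mul_sum]
    exact Finset.sum_le_sum (fun a _ => hper a)
  have hcard := Finset.card_le_card hsub
  have : (((univ : Finset (Cfg n)).filter
      (fun c => 0 < valN x c 0 ∧ Vfrom x 1 c)).card : ℝ)
      ≤ ((NBf x).card : ℝ) := by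
    exact_mod_cast hcard
  linarith

def Tmap (g : Cfg n) (v : Fin n → ℝ) : Fin n → ℝ :=
  fun i => (if g.2 i then (1:ℝ) else -1) * v (g.1 i)

noncomputable def vN (v : Fin n → ℝ) (i : ℕ) : ℝ := if h : i < n then v ⟨i, h⟩ else 0

noncomputable def pS (k : ℕ) (v : Fin n → ℝ) : ℝ := ∑ i ∈ range k, vN v i

lemma pS_Tmap (g : Cfg n) (v : Fin n → ℝ) (k : ℕ) : pS k (Tmap g v) = T v g k := by
  unfold pS T
  refine Finset.sum_congr rfl (fun i _ => ?_)
  unfold vN valN Tmap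
  by_cases h : i < n
  · rw [dif_pos h, dif_pos h]
    cases hb : g.2 ⟨i, h⟩ <;> simp [hb]
  · rw [dif_neg h, dif_neg h]

lemma Tmap_measurable (g : Cfg n) : Measurable (Tmap g) := by
  apply measurable_pi_lambda
  intro i
  exact (measurable_pi_apply (g.1 i)).const_mul _

lemma vN_measurable (i : ℕ) : Measurable (fun v : Fin n → ℝ => vN v i) := by
  unfold vN
  by_cases h : i < n
  · simp only [dif_pos h]
    exact measurable_pi_apply _
  · simp only [dif_neg h]
    exact measurable_const

lemma pS_measurable (k : ℕ) : Measurable (fun v : Fin n → ℝ => pS k v) := by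
  unfold pS
  exact Finset.measurable_sum _ (fun i _ => vN_measurable i)

end Persist

open MeasureTheory ProbabilityTheory Persist Finset
open scoped ENNReal

/-- Lower bound for the strict persistence probability of an exchangeable sign-invariant vector:
`P(S_k > 0, 1 ≤ k ≤ n) ≥ P(ξ₁ > 0) · g(n-1)` with `g(m) = (2m choose m)/4^m`. -/
theorem persistence_lower_bound_exchangeable_sign_invariant
    {Ω : Type*} [MeasurableSpace Ω] (P : Measure Ω) [IsProbabilityMeasure P]
    (n : ℕ) (hn : 1 ≤ n) (ξ : ℕ → Ω → ℝ)
    (hmeas : ∀ i, i < n → Measurable (ξ i))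
    (hexch : ∀ σ : Equiv.Perm (Fin n),
      Measure.map (fun ω => fun i : Fin n => ξ (σ i) ω) P
        = Measure.map (fun ω => fun i : Fin n => ξ i ω) P)
    (hsign : ∀ ε : Fin n → ℝ, (∀ i, ε i = 1 ∨ ε i = -1) →
      Measure.map (fun ω => fun i : Fin n => ε i * ξ i ω) P
        = Measure.map (fun ω => fun i : Fin n => ξ i ω) P)
    (S : ℕ → Ω → ℝ) (hS : ∀ k ω, S k ω = ∑ i ∈ Finset.range k, ξ i ω) :
    P {ω | 0 < ξ 0 ω} * ENNReal.ofReal ((Nat.choose (2 * (n - 1)) (n - 1) : ℝ) / 4 ^ (n - 1))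
      ≤ P {ω | ∀ k, 1 ≤ k → k ≤ n → 0 < S k ω} := by
  classical
  have hn0 : 0 < n := hn
  set ξvec : Ω → (Fin n → ℝ) := fun ω i => ξ i ω with hξvec
  have hξm : Measurable ξvec := measurable_pi_lambda _ (fun i => hmeas i i.2)
  set μ : Measure (Fin n → ℝ) := Measure.map ξvec P with hμ
  -- invariance of μ under signed permutations
  have hinv : ∀ g : Cfg n, Measure.map (Tmap g) μ = μ := by
    intro g
    set ε : Fin n → ℝ := fun i => if g.2 i then 1 else -1 with hε
    have hsgn : ∀ i, ε i = 1 ∨ ε i = -1 := by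
      intro i
      by_cases h : g.2 i <;> simp [hε, h]
    have hpm : Measurable (fun v : Fin n → ℝ => fun i => v (g.1 i)) :=
      measurable_pi_lambda _ (fun i => measurable_pi_apply _)
    have hsm : Measurable (fun v : Fin n → ℝ => fun i => ε i * v i) :=
      measurable_pi_lambda _ (fun i => (measurable_pi_apply i).const_mul _)
    have hperm : Measure.map (fun v : Fin n → ℝ => fun i => v (g.1 i)) μ = μ := by
      rw [hμ, Measure.map_map hpm hξm]
      have e : ((fun v : Fin n → ℝ => fun i => v (g.1 i)) ∘ ξvec)
          = fun ω => fun i : Fin n => ξ (g.1 i) ω := rfl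
      rw [e]
      exact hexch g.1
    have hsgn' : Measure.map (fun v : Fin n → ℝ => fun i => ε i * v i) μ = μ := by
      rw [hμ, Measure.map_map hsm hξm]
      have e : ((fun v : Fin n → ℝ => fun i => ε i * v i) ∘ ξvec)
          = fun ω => fun i : Fin n => ε i * ξ i ω := rfl
      rw [e]
      exact hsign ε hsgn
    have hcomp : Tmap g
        = (fun v : Fin n → ℝ => fun i => ε i * v i) ∘ (fun v : Fin n → ℝ => fun i => v (g.1 i)) := rfl
    rw [hcomp, ← Measure.map_map hsm hpm, hperm, hsgn']
  -- the two events
  set Bs : Set (Fin n → ℝ) := {v | ∀ k, 1 ≤ k → k ≤ n → 0 < pS k v} with hBs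
  set As : Set (Fin n → ℝ) := {v | 0 < vN v 0} with hAs
  have hBsm : MeasurableSet Bs := by
    have : Bs = ⋂ (k : ℕ), ⋂ (_ : 1 ≤ k), ⋂ (_ : k ≤ n), {v : Fin n → ℝ | 0 < pS k v} := by
      ext v
      simp only [hBs, Set.mem_setOf_eq, Set.mem_iInter]
    rw [this]
    exact MeasurableSet.iInter (fun k => MeasurableSet.iInter (fun _ =>
      MeasurableSet.iInter (fun _ => measurableSet_lt measurable_const (pS_measurable k))))
  have hAsm : MeasurableSet As := measurableSet_lt measurable_const (vN_measurable 0)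
  -- preimages of the events are the events of the theorem
  have hBev : ξvec ⁻¹' Bs = {ω | ∀ k, 1 ≤ k → k ≤ n → 0 < S k ω} := by
    ext ω
    simp only [Set.mem_preimage, hBs, Set.mem_setOf_eq]
    have hps : ∀ k, k ≤ n → pS k (ξvec ω) = S k ω := by
      intro k hk
      rw [hS]
      unfold pS vN
      refine Finset.sum_congr rfl (fun i hi => ?_)
      simp only [Finset.mem_range] at hi
      rw [dif_pos (by omega : i < n)]
    constructor
    · intro h k h1 h2
      rw [← hps k h2]
      exact h k h1 h2
    · intro h k h1 h2
      rw [hps k h2]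
      exact h k h1 h2
  have hAev : ξvec ⁻¹' As = {ω | 0 < ξ 0 ω} := by
    ext ω
    simp only [Set.mem_preimage, hAs, Set.mem_setOf_eq]
    have hv : vN (ξvec ω) 0 = ξ 0 ω := by
      unfold vN
      exact dif_pos hn0
    rw [hv]
  -- counting function identities
  have hNB : ∀ v : Fin n → ℝ,
      ((univ : Finset (Cfg n)).filter (fun g => Tmap g v ∈ Bs)).card = (NBf v).card := by
    intro v
    congr 1
    rw [NBf]
    ext g
    simp only [Finset.mem_filter, Finset.mem_univ, true_and, hBs, Set.mem_setOf_eq]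
    constructor
    · intro h k h1 h2
      have := h k h1 h2
      rwa [pS_Tmap] at this
    · intro h k h1 h2
      rw [pS_Tmap]
      exact h k h1 h2
  have hNA : ∀ v : Fin n → ℝ,
      ((univ : Finset (Cfg n)).filter (fun g => Tmap g v ∈ As)).card = (NAf v).card := by
    intro v
    congr 1
    rw [NAf]
    ext g
    simp only [Finset.mem_filter, Finset.mem_univ, true_and, hAs, Set.mem_setOf_eq]
    have e : vN (Tmap g v) 0 = valN v g 0 := by
      have := pS_Tmap g v 1
      unfold pS T at this
      rwa [Finset.sum_range_one, Finset.sum_range_one] at this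
    rw [e]
  -- group averaging
  have hGcount : ∀ (Cs : Set (Fin n → ℝ)), MeasurableSet Cs →
      ∑ g ∈ (univ : Finset (Cfg n)), μ (Tmap g ⁻¹' Cs)
        = ∫⁻ v, (((univ : Finset (Cfg n)).filter (fun g => Tmap g v ∈ Cs)).card : ℝ≥0∞) ∂μ := by
    intro Cs hCs
    have h1 : ∀ g : Cfg n, μ (Tmap g ⁻¹' Cs)
        = ∫⁻ v, (Tmap g ⁻¹' Cs).indicator 1 v ∂μ := by
      intro g
      rw [lintegral_indicator_one ((Tmap_measurable g) hCs)]
    rw [Finset.sum_congr rfl (fun g _ => h1 g)]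
    rw [← lintegral_finset_sum]
    · apply lintegral_congr
      intro v
      have : ∀ g : Cfg n, (Tmap g ⁻¹' Cs).indicator (1 : (Fin n → ℝ) → ℝ≥0∞) v
          = if Tmap g v ∈ Cs then 1 else 0 := by
        intro g
        by_cases h : Tmap g v ∈ Cs
        · rw [Set.indicator_of_mem (show v ∈ Tmap g ⁻¹' Cs from h), if_pos h]
          rfl
        · rw [Set.indicator_of_notMem (show v ∉ Tmap g ⁻¹' Cs from h), if_neg h]
      rw [Finset.sum_congr rfl (fun g _ => this g), Finset.sum_boole]
    · intro g _
      exact (measurable_one.indicator ((Tmap_measurable g) hCs))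
  -- each preimage has the same measure
  have hsame : ∀ (Cs : Set (Fin n → ℝ)), MeasurableSet Cs → ∀ g : Cfg n,
      μ (Tmap g ⁻¹' Cs) = μ Cs := by
    intro Cs hCs g
    rw [← Measure.map_apply (Tmap_measurable g) hCs, hinv g]
  -- pointwise star inequality in ℝ≥0∞
  have hpoint : ∀ v : Fin n → ℝ,
      ENNReal.ofReal (gr (n-1)) * (((univ : Finset (Cfg n)).filter (fun g => Tmap g v ∈ As)).card : ℝ≥0∞)
        ≤ (((univ : Finset (Cfg n)).filter (fun g => Tmap g v ∈ Bs)).card : ℝ≥0∞) := by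
    intro v
    rw [hNA v, hNB v]
    have hstar := star v hn0
    calc ENNReal.ofReal (gr (n-1)) * ((NAf v).card : ℝ≥0∞)
        = ENNReal.ofReal (gr (n-1)) * ENNReal.ofReal (((NAf v).card : ℝ)) := by
          rw [ENNReal.ofReal_natCast]
      _ = ENNReal.ofReal (gr (n-1) * ((NAf v).card : ℝ)) := by
          rw [ENNReal.ofReal_mul (gr_nonneg _)]
      _ ≤ ENNReal.ofReal (((NBf v).card : ℝ)) := ENNReal.ofReal_le_ofReal hstar
      _ = ((NBf v).card : ℝ≥0∞) := ENNReal.ofReal_natCast _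
  -- combine
  have hmain : ENNReal.ofReal (gr (n-1)) * ((Fintype.card (Cfg n) : ℝ≥0∞) * μ As)
      ≤ (Fintype.card (Cfg n) : ℝ≥0∞) * μ Bs := by
    have hb : (Fintype.card (Cfg n) : ℝ≥0∞) * μ Bs
        = ∑ g ∈ (univ : Finset (Cfg n)), μ (Tmap g ⁻¹' Bs) := by
      rw [Finset.sum_congr rfl (fun g _ => hsame Bs hBsm g), Finset.sum_const,
        Finset.card_univ, nsmul_eq_mul]
    have ha : (Fintype.card (Cfg n) : ℝ≥0∞) * μ As
        = ∑ g ∈ (univ : Finset (Cfg n)), μ (Tmap g ⁻¹' As) := by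
      rw [Finset.sum_congr rfl (fun g _ => hsame As hAsm g), Finset.sum_const,
        Finset.card_univ, nsmul_eq_mul]
    rw [hb, ha, hGcount Bs hBsm, hGcount As hAsm, ← MeasureTheory.lintegral_const_mul']
    · apply lintegral_mono
      intro v
      convert hpoint v using 2 <;>
      · congr 1
        ext g
        simp [Finset.mem_filter]
    · exact ENNReal.ofReal_ne_top
  have hcardpos : (Fintype.card (Cfg n) : ℝ≥0∞) ≠ 0 := by
    simp [Fintype.card_ne_zero]
  have hcardfin : (Fintype.card (Cfg n) : ℝ≥0∞) ≠ ⊤ := ENNReal.natCast_ne_top _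
  have hred : ENNReal.ofReal (gr (n-1)) * μ As ≤ μ Bs := by
    rw [← ENNReal.mul_le_mul_iff_right hcardpos hcardfin]
    calc (Fintype.card (Cfg n) : ℝ≥0∞) * (ENNReal.ofReal (gr (n-1)) * μ As)
        = ENNReal.ofReal (gr (n-1)) * ((Fintype.card (Cfg n) : ℝ≥0∞) * μ As) := by ring
      _ ≤ (Fintype.card (Cfg n) : ℝ≥0∞) * μ Bs := hmain
  -- translate back
  have hPB : μ Bs = P {ω | ∀ k, 1 ≤ k → k ≤ n → 0 < S k ω} := by
    rw [hμ, Measure.map_apply hξm hBsm, hBev]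
  have hPA : μ As = P {ω | 0 < ξ 0 ω} := by
    rw [hμ, Measure.map_apply hξm hAsm, hAev]
  have hgr : ENNReal.ofReal ((Nat.choose (2 * (n - 1)) (n - 1) : ℝ) / 4 ^ (n - 1))
      = ENNReal.ofReal (gr (n-1)) := by
    rfl
  rw [hgr, mul_comm]
  rw [hPB, hPA] at hred
  exact hred
end

section
/- For every integer n ≥ 1, 1/√(π(n + 1/2)) ≤ g(n) ≤ 1/√(πn), where g(n) = (2n choose n)/4ⁿ. -/
open Real Filter Stirling Topology

noncomputable def gg (n : ℕ) : ℝ := (Nat.choose (2 * n) n : ℝ) / 4 ^ n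

lemma gg_pos (n : ℕ) : 0 < gg n := by
  have : 0 < Nat.choose (2*n) n := Nat.choose_pos (by omega)
  unfold gg
  positivity

lemma gg_succ (n : ℕ) : gg (n+1) = gg n * (2*n+1) / (2*n+2) := by
  have h := Nat.succ_mul_centralBinom_succ n
  rw [Nat.centralBinom, Nat.centralBinom] at h
  have h' : ((n:ℝ)+1) * (Nat.choose (2*(n+1)) (n+1) : ℝ)
      = 2 * ((2*n:ℝ)+1) * (Nat.choose (2*n) n : ℝ) := by
    exact_mod_cast congrArg (Nat.cast : ℕ → ℝ) h
  have hne : ((n:ℝ)+1) ≠ 0 := by positivity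
  unfold gg
  field_simp
  linear_combination (2 * (4:ℝ)^n) * h'

lemma key (n : ℕ) (hn : 1 ≤ n) :
    gg n * Real.sqrt n = stirlingSeq (2*n) / (stirlingSeq n)^2 := by
  have hn0 : (0:ℝ) < n := by exact_mod_cast hn
  have hs : (0:ℝ) < Real.sqrt n := Real.sqrt_pos.mpr hn0
  have hfac : ((2*n).choose n : ℝ) * ((n.factorial : ℝ) * n.factorial) = ((2*n).factorial : ℝ) := by
    have h := Nat.choose_mul_factorial_mul_factorial (show n ≤ 2*n by omega)
    rw [show 2*n - n = n by omega] at h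
    have := congrArg (Nat.cast : ℕ → ℝ) h
    push_cast at this
    linarith
  have he : (0:ℝ) < Real.exp 1 := Real.exp_pos 1
  have hfpos : (0:ℝ) < (n.factorial : ℝ) := by positivity
  have h2 : (Real.sqrt (2*n:ℝ))^2 = 2*(n:ℝ) := Real.sq_sqrt (by positivity)
  have hsq : (stirlingSeq n)^2 = (n.factorial:ℝ)^2 / ((2*(n:ℝ)) * ((n:ℝ)/Real.exp 1)^(2*n)) := by
    rw [stirlingSeq, div_pow, mul_pow, h2, ← pow_mul, mul_comm n 2]
  have h4 : Real.sqrt (2*((2*n:ℕ):ℝ)) = 2 * Real.sqrt n := by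
    push_cast
    rw [show (2:ℝ)*(2*n) = 4 * n by ring, Real.sqrt_mul (by norm_num),
      show Real.sqrt 4 = 2 by rw [show (4:ℝ) = 2^2 by norm_num, Real.sqrt_sq (by norm_num)]]
  have hp : (((2*n:ℕ):ℝ) / Real.exp 1)^(2*n) = 4^n * ((n:ℝ)/Real.exp 1)^(2*n) := by
    push_cast
    rw [show (2*(n:ℝ))/Real.exp 1 = 2 * ((n:ℝ)/Real.exp 1) by ring, mul_pow,
      show (2:ℝ)^(2*n) = 4^n by rw [pow_mul]; norm_num]
  have hS : stirlingSeq (2*n) = ((2*n).factorial : ℝ) / (2 * Real.sqrt n * (4^n * ((n:ℝ)/Real.exp 1)^(2*n))) := by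
    rw [stirlingSeq, h4, hp]
  rw [hS, hsq]
  unfold gg
  have hss : Real.sqrt n * Real.sqrt n = (n:ℝ) := Real.mul_self_sqrt hn0.le
  have hpe : (0:ℝ) < ((n:ℝ)/Real.exp 1)^(2*n) := by positivity
  have h4p : (0:ℝ) < (4:ℝ)^n := by positivity
  have hss2 : Real.sqrt n ^ 2 = (n:ℝ) := Real.sq_sqrt hn0.le
  field_simp
  linear_combination (((2*n).choose n : ℝ) * (n.factorial:ℝ)^2) * hss2 + (n:ℝ) * hfac


lemma gg_A_mono : Monotone (fun n : ℕ => gg n ^ 2 * n) := by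
  apply monotone_nat_of_le_succ
  intro n
  simp only [gg_succ, Nat.cast_succ]
  have h1 : (0:ℝ) < (2*(n:ℝ)+2)^2 := by positivity
  rw [div_pow, div_mul_eq_mul_div, le_div_iff₀ h1]
  have hn : (0:ℝ) ≤ n := Nat.cast_nonneg n
  nlinarith [sq_nonneg (gg n), mul_nonneg (sq_nonneg (gg n)) hn]

lemma gg_B_anti : Antitone (fun n : ℕ => gg n ^ 2 * ((n:ℝ) + 1/2)) := by
  apply antitone_nat_of_succ_le
  intro n
  simp only [gg_succ, Nat.cast_succ]
  have h1 : (0:ℝ) < (2*(n:ℝ)+2)^2 := by positivity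
  rw [div_pow, div_mul_eq_mul_div, div_le_iff₀ h1]
  have hn : (0:ℝ) ≤ n := Nat.cast_nonneg n
  nlinarith [sq_nonneg (gg n), mul_nonneg (sq_nonneg (gg n)) hn]

lemma tendsto_gs : Tendsto (fun n : ℕ => gg n * Real.sqrt n) atTop (𝓝 (1/Real.sqrt π)) := by
  have h2 : Tendsto (fun n : ℕ => stirlingSeq (2*n)) atTop (𝓝 (Real.sqrt π)) :=
    tendsto_stirlingSeq_sqrt_pi.comp (tendsto_atTop_mono (fun n => by simp; omega) tendsto_id)
  have h1 : Tendsto (fun n : ℕ => (stirlingSeq n)^2) atTop (𝓝 ((Real.sqrt π)^2)) :=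
    tendsto_stirlingSeq_sqrt_pi.pow 2
  have hπ : (Real.sqrt π)^2 ≠ 0 := by positivity
  have hd := h2.div h1 hπ
  have heq : Real.sqrt π / (Real.sqrt π)^2 = 1/Real.sqrt π := by
    have : Real.sqrt π ≠ 0 := by positivity
    rw [pow_two]
    field_simp
  rw [heq] at hd
  refine Tendsto.congr' ?_ hd
  filter_upwards [eventually_ge_atTop 1] with n hn
  exact (key n hn).symm

lemma tendsto_A : Tendsto (fun n : ℕ => gg n ^ 2 * n) atTop (𝓝 (1/π)) := by
  have h := tendsto_gs.pow 2
  have heq : (1/Real.sqrt π)^2 = 1/π := by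
    rw [div_pow, one_pow, Real.sq_sqrt Real.pi_pos.le]
  rw [heq] at h
  exact h.congr fun n => by rw [mul_pow, Real.sq_sqrt (Nat.cast_nonneg n)]

lemma tendsto_gg0 : Tendsto gg atTop (𝓝 0) := by
  have hst : Tendsto (fun x : ℝ => Real.sqrt x) atTop atTop := by
    apply (tendsto_rpow_atTop (by norm_num : (0:ℝ) < 1/2)).congr'
    filter_upwards [eventually_ge_atTop (0:ℝ)] with x hx
    exact (Real.sqrt_eq_rpow x).symm
  have hsn : Tendsto (fun n : ℕ => Real.sqrt n) atTop atTop :=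
    hst.comp tendsto_natCast_atTop_atTop
  have hinv : Tendsto (fun n : ℕ => (Real.sqrt n)⁻¹) atTop (𝓝 0) :=
    hsn.inv_tendsto_atTop
  have h := tendsto_gs.mul hinv
  rw [mul_zero] at h
  refine Tendsto.congr' ?_ h
  filter_upwards [eventually_ge_atTop 1] with n hn
  have hne : Real.sqrt n ≠ 0 := by
    have : (0:ℝ) < n := by exact_mod_cast hn
    positivity
  field_simp

lemma tendsto_B : Tendsto (fun n : ℕ => gg n ^ 2 * ((n:ℝ) + 1/2)) atTop (𝓝 (1/π)) := by
  have h := tendsto_A.add ((tendsto_gg0.pow 2).mul_const (1/2 : ℝ))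
  rw [show (0:ℝ)^2 * (1/2) = 0 by ring, add_zero] at h
  exact h.congr fun n => by ring

/-- For every `n ≥ 1`, `1/√(π(n+1/2)) ≤ g(n) ≤ 1/√(πn)` where `g(n) = (2n choose n)/4ⁿ`. -/
theorem central_binomial_sqrt_bounds (n : ℕ) (hn : 1 ≤ n) :
    1 / Real.sqrt (Real.pi * (n + 1 / 2)) ≤ (Nat.choose (2 * n) n : ℝ) / 4 ^ n ∧
    (Nat.choose (2 * n) n : ℝ) / 4 ^ n ≤ 1 / Real.sqrt (Real.pi * n) := by
  have hg := gg_pos n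
  have hn0 : (0:ℝ) < n := by exact_mod_cast hn
  have hπ := Real.pi_pos
  have hA : gg n ^ 2 * n ≤ 1/π := gg_A_mono.ge_of_tendsto tendsto_A n
  have hB : 1/π ≤ gg n ^ 2 * ((n:ℝ) + 1/2) := gg_B_anti.le_of_tendsto tendsto_B n
  constructor
  · rw [show (1:ℝ) / Real.sqrt (π * (n + 1/2)) = Real.sqrt (1 / (π * (n + 1/2))) by
      rw [one_div (Real.sqrt (π * ((n:ℝ) + 1/2))), one_div (π * ((n:ℝ) + 1/2)), Real.sqrt_inv]]
    have h1 : 1 / (π * ((n:ℝ) + 1/2)) ≤ gg n ^ 2 := by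
      rw [div_le_iff₀ (by positivity)]
      calc 1 = π * (1/π) := by field_simp
        _ ≤ π * (gg n ^ 2 * ((n:ℝ) + 1/2)) := by
            exact mul_le_mul_of_nonneg_left hB hπ.le
        _ = gg n ^ 2 * (π * ((n:ℝ) + 1/2)) := by ring
    calc Real.sqrt (1 / (π * (n + 1/2))) ≤ Real.sqrt (gg n ^ 2) := Real.sqrt_le_sqrt h1
      _ = gg n := Real.sqrt_sq hg.le
  · rw [show (1:ℝ) / Real.sqrt (π * n) = Real.sqrt (1 / (π * n)) by
      rw [one_div (Real.sqrt (π * (n:ℝ))), one_div (π * (n:ℝ)), Real.sqrt_inv]]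
    have h1 : gg n ^ 2 ≤ 1 / (π * (n:ℝ)) := by
      rw [le_div_iff₀ (by positivity)]
      calc gg n ^ 2 * (π * (n:ℝ)) = π * (gg n ^ 2 * n) := by ring
        _ ≤ π * (1/π) := mul_le_mul_of_nonneg_left hA hπ.le
        _ = 1 := by field_simp
    calc gg n = Real.sqrt (gg n ^ 2) := (Real.sqrt_sq hg.le).symm
      _ ≤ Real.sqrt (1 / (π * (n:ℝ))) := Real.sqrt_le_sqrt h1
end
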